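/- arXiv:2405.14018 — 3 statements merged into one kernel-verified Lean document; each statement's English description precedes it below -/
import Mathlib

section
/- For any ε > 0 and any continuous probability density function f on ℝ, there exists m_0 such that for all m ≥ m_0 and every admissible choice of green list G (one interval from each of the m pairs partitioning [0,1] into 2m equal subintervals), the probability that a random variable x with density f has fractional part in G satisfies |P(x − ⌊x⌋ ∈ G) − 1/2| < 2ε. -/
open MeasureTheory Set

def greenInterval (m : ℕ) (b : Fin m → Bool) (k : Fin m) : Set ℝ :=
  Set.Icc ((2 * (k : ℝ) + (if b k then 1 else 0)) / (2 * m))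
          ((2 * (k : ℝ) + (if b k then 1 else 0) + 1) / (2 * m))

def greenSet (m : ℕ) (b : Fin m → Bool) : Set ℝ :=
  ⋃ k : Fin m, greenInterval m b k


lemma l1_translate_cont {f : ℝ → ℝ} (hf : Integrable f) {ε : ℝ} (hε : 0 < ε) :
    ∃ δ > (0:ℝ), ∀ h : ℝ, |h| ≤ δ → ∫ x, |f (x + h) - f x| < ε := by
  obtain ⟨g, hg_supp, hg_close, hg_cont, hg_int⟩ :=
    hf.exists_hasCompactSupport_integral_sub_le (show (0:ℝ) < ε/4 by linarith)
  obtain ⟨R, hR_pos, hR⟩ := hg_supp.exists_pos_le_norm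
  have hgu : UniformContinuous g := hg_supp.uniformContinuous_of_continuous hg_cont
  set ε' : ℝ := ε / (4 * (2*R + 2)) with hε'def
  have hε' : 0 < ε' := by positivity
  obtain ⟨δ₀, hδ₀, hδ₀'⟩ := Metric.uniformContinuous_iff.mp hgu ε' hε'
  refine ⟨min 1 (δ₀/2), by positivity, fun h hh => ?_⟩
  have hh1 : |h| ≤ 1 := le_trans hh (min_le_left _ _)
  have hhδ : |h| < δ₀ := lt_of_le_of_lt (le_trans hh (min_le_right _ _)) (by linarith)
  have hfh : Integrable (fun x => f (x + h)) := hf.comp_add_right h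
  have hgh : Integrable (fun x => g (x + h)) := hg_int.comp_add_right h
  -- triangle inequality
  have tri : ∫ x, |f (x + h) - f x| ≤
      (∫ x, |f (x + h) - g (x + h)|) + (∫ x, |g (x + h) - g x|) + (∫ x, |g x - f x|) := by
    have h1 : Integrable (fun x => |f (x+h) - g (x+h)|) := (hfh.sub hgh).abs
    have h2 : Integrable (fun x => |g (x+h) - g x|) := (hgh.sub hg_int).abs
    have h3 : Integrable (fun x => |g x - f x|) := (hg_int.sub hf).abs
    calc ∫ x, |f (x + h) - f x|
        ≤ ∫ x, (|f (x+h) - g (x+h)| + |g (x+h) - g x| + |g x - f x|) := by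
          refine integral_mono (hfh.sub hf).abs ((h1.add h2).add h3) fun x => ?_
          have := abs_sub_abs_le_abs_sub (f (x+h)) (f x)
          calc |f (x + h) - f x| = |(f (x+h) - g (x+h)) + (g (x+h) - g x) + (g x - f x)| := by ring_nf
            _ ≤ _ := by
              refine le_trans (abs_add_le _ _) ?_
              gcongr
              exact abs_add_le _ _
      _ = _ := by
          have h12 : Integrable (fun x => |f (x+h) - g (x+h)| + |g (x+h) - g x|) := h1.add h2
          rw [integral_add h12 h3, integral_add h1 h2]
  -- first piece
  have p1 : ∫ x, |f (x + h) - g (x + h)| = ∫ x, |f x - g x| :=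
    integral_add_right_eq_self (fun x => |f x - g x|) h
  have p1' : ∫ x, |f x - g x| ≤ ε/4 := by
    have := hg_close
    simpa [Real.norm_eq_abs] using this
  have p3 : ∫ x, |g x - f x| ≤ ε/4 := by
    rw [show (fun x => |g x - f x|) = fun x => |f x - g x| by funext x; rw [abs_sub_comm]]
    exact p1'
  -- middle piece
  have p2 : ∫ x, |g (x + h) - g x| ≤ ε/4 := by
    have hzero : ∀ x ∉ Icc (-(R+1)) (R+1), |g (x + h) - g x| = 0 := by
      intro x hx
      simp only [mem_Icc, not_and_or, not_le] at hx
      have hx1 : R ≤ ‖x‖ := by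
        rcases hx with hx | hx
        · rw [Real.norm_eq_abs, abs_of_nonpos (by linarith)]; linarith
        · rw [Real.norm_eq_abs, abs_of_nonneg (by linarith)]; linarith
      have hx2 : R ≤ ‖x + h‖ := by
        rw [Real.norm_eq_abs] at hx1 ⊢
        rcases hx with hx | hx
        · rw [abs_of_nonpos (by cases abs_le.1 hh1; linarith)]
          cases abs_le.1 hh1; linarith [abs_of_nonpos (show x ≤ 0 by linarith) ▸ hx1]
        · rw [abs_of_nonneg (by cases abs_le.1 hh1; linarith)]
          cases abs_le.1 hh1; linarith
      rw [hR x hx1, hR _ hx2, sub_zero, abs_zero]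
    have heq : ∫ x, |g (x + h) - g x| = ∫ x in Icc (-(R+1)) (R+1), |g (x + h) - g x| :=
      (setIntegral_eq_integral_of_forall_compl_eq_zero (fun x hx => hzero x hx)).symm
    rw [heq]
    have hbound : ∀ x ∈ Icc (-(R+1)) (R+1), |g (x + h) - g x| ≤ ε' := by
      intro x _
      have : dist (x + h) x < δ₀ := by
        rw [Real.dist_eq]; simpa using hhδ
      have := hδ₀' this
      rw [Real.dist_eq] at this
      exact this.le
    calc ∫ x in Icc (-(R+1)) (R+1), |g (x + h) - g x|
        ≤ ∫ _x in Icc (-(R+1)) (R+1), ε' := by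
          refine setIntegral_mono_on ((hgh.sub hg_int).abs.integrableOn) (integrableOn_const ?_) measurableSet_Icc hbound
          rw [Real.volume_Icc]; exact ENNReal.ofReal_ne_top
      _ = ε/4 := by
          rw [setIntegral_const, smul_eq_mul, measureReal_def, Real.volume_Icc,
            ENNReal.toReal_ofReal (by linarith), hε'def]
          field_simp
          ring
  linarith

/-- basic dyadic interval with natural index -/
def nIcc (m p : ℕ) : Set ℝ := Icc ((p : ℝ) / (2 * m)) (((p : ℝ) + 1) / (2 * m))

lemma measurable_nIcc (m p : ℕ) : MeasurableSet (nIcc m p) := measurableSet_Icc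

lemma greenInterval_eq_nIcc (m : ℕ) (b : Fin m → Bool) (k : Fin m) :
    greenInterval m b k = nIcc m (2 * k + cond (b k) 1 0) := by
  cases hb : b k <;> simp [greenInterval, nIcc, hb]

lemma volume_fract_preimage_zero {C : Set ℝ} (hC : C.Countable) :
    volume (Int.fract ⁻¹' C) = 0 := by
  refine measure_mono_null (fun x hx => ?_) ((Set.countable_iUnion
    (fun n : ℤ => hC.image (fun c => (n : ℝ) + c))).measure_zero _)
  simp only [mem_iUnion, mem_image]
  exact ⟨⌊x⌋, Int.fract x, hx, by rw [Int.fract]; ring⟩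

lemma grid_countable (m : ℕ) : {y : ℝ | ∃ j : ℕ, y = (j : ℝ) / (2 * m)}.Countable := by
  have : {y : ℝ | ∃ j : ℕ, y = (j : ℝ) / (2 * m)} = Set.range (fun j : ℕ => (j : ℝ) / (2 * m)) := by
    ext y; simp [eq_comm]
  rw [this]; exact Set.countable_range _

lemma grid_inter {m : ℕ} (hm : (0:ℝ) < m) {p q : ℕ} (hpq : p ≠ q) {y : ℝ}
    (hp : y ∈ nIcc m p) (hq : y ∈ nIcc m q) : ∃ j : ℕ, y = (j : ℝ) / (2 * m) := by
  obtain ⟨hp1, hp2⟩ := hp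
  obtain ⟨hq1, hq2⟩ := hq
  rcases Nat.lt_or_ge p q with hlt | hge
  · have h1 : (p : ℝ) + 1 ≤ q := by exact_mod_cast hlt
    refine ⟨q, le_antisymm (le_trans hp2 ?_) hq1⟩
    gcongr
  · have hlt : q < p := lt_of_le_of_ne hge (Ne.symm hpq)
    have h1 : (q : ℝ) + 1 ≤ p := by exact_mod_cast hlt
    refine ⟨p, le_antisymm (le_trans hq2 ?_) hp1⟩
    gcongr

lemma nIcc_subset_Icc {m p : ℕ} (hm : (0:ℝ) < m) (h1 : 1 ≤ p) (h2 : p + 1 ≤ 2 * m) :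
    nIcc m p ⊆ Icc (1 / (2 * (m:ℝ))) 1 := by
  intro y ⟨hy1, hy2⟩
  constructor
  · refine le_trans ?_ hy1
    gcongr
    exact_mod_cast h1
  · refine le_trans hy2 ?_
    rw [div_le_one (by positivity)]
    have : ((p : ℝ) + 1) ≤ 2 * m := by exact_mod_cast h2
    linarith

lemma nIcc_subset_Icc01 {m p : ℕ} (hm : (0:ℝ) < m) (h2 : p + 1 ≤ 2 * m) :
    nIcc m p ⊆ Icc (0:ℝ) 1 := by
  intro y ⟨hy1, hy2⟩
  constructor
  · exact le_trans (by positivity) hy1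
  · refine le_trans hy2 ?_
    rw [div_le_one (by positivity)]
    have : ((p : ℝ) + 1) ≤ 2 * m := by exact_mod_cast h2
    linarith

lemma fract_shift_ae {h : ℝ} (hh0 : 0 < h) (hh1 : h < 1) {J : Set ℝ}
    (hJ : J ⊆ Icc h 1) :
    {x : ℝ | Int.fract x + h ∈ J} =ᵐ[volume] (fun x => x + h) ⁻¹' (Int.fract ⁻¹' J) := by
  have hnull : volume {x : ℝ | Int.fract x = 1 - h} = 0 :=
    volume_fract_preimage_zero (Set.countable_singleton (1 - h))
  have hae : ∀ᵐ x : ℝ ∂volume, Int.fract x ≠ 1 - h := by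
    rw [ae_iff]
    simpa using hnull
  filter_upwards [hae] with x hx
  simp only [mem_setOf_eq, mem_preimage, eq_iff_iff]
  show Int.fract x + h ∈ J ↔ Int.fract (x + h) ∈ J
  by_cases hlt : Int.fract x + h < 1
  · have heq : Int.fract (x + h) = Int.fract x + h := by
      rw [show x + h = (⌊x⌋ : ℝ) + (Int.fract x + h) by rw [Int.fract]; ring,
        Int.fract_intCast_add]
      exact Int.fract_eq_self.mpr ⟨by have := Int.fract_nonneg x; linarith, hlt⟩
    rw [heq]
  · push_neg at hlt
    have hne : Int.fract x + h ≠ 1 := fun e => hx (by linarith)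
    have hgt : 1 < Int.fract x + h := lt_of_le_of_ne hlt (Ne.symm hne)
    have hfl : Int.fract x < 1 := Int.fract_lt_one x
    have hfr : Int.fract (x + h) = Int.fract x + h - 1 := by
      rw [show x + h = ((⌊x⌋ + 1 : ℤ) : ℝ) + (Int.fract x + h - 1) by
        push_cast; rw [Int.fract]; ring, Int.fract_intCast_add]
      exact Int.fract_eq_self.mpr ⟨by linarith, by linarith⟩
    constructor
    · intro hmem; exact absurd (hJ hmem).2 (by linarith)
    · intro hmem; rw [hfr] at hmem; have := (hJ hmem).1; linarith

lemma setIntegral_comp_add_right' (g : ℝ → ℝ) {s : Set ℝ} (hs : MeasurableSet s) (c : ℝ) :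
    ∫ x in (fun y => y + c) ⁻¹' s, g (x + c) = ∫ x in s, g x := by
  have hps : MeasurableSet ((fun y => y + c) ⁻¹' s) := hs.preimage (measurable_add_const c)
  rw [← integral_indicator hs, ← integral_indicator hps,
    ← integral_add_right_eq_self (s.indicator g) c]
  refine integral_congr_ae (Filter.Eventually.of_forall fun x => ?_)
  by_cases hx : x + c ∈ s
  · simp [Set.indicator, mem_preimage, hx]
  · simp [Set.indicator, mem_preimage, hx]


lemma mem_nIcc_add (m p : ℕ) (y : ℝ) :
    y + 1 / (2 * m) ∈ nIcc m (p + 1) ↔ y ∈ nIcc m p := by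
  simp only [nIcc, mem_Icc]
  push_cast
  simp only [add_div]
  constructor <;> rintro ⟨h1, h2⟩ <;> exact ⟨by linarith, by linarith⟩

lemma greenSet_eq_union (m : ℕ) (b : Fin m → Bool) :
    greenSet m b = (⋃ k : Fin m, ⋃ (_ : b k = false), nIcc m (2 * k)) ∪
                   (⋃ k : Fin m, ⋃ (_ : b k = true), nIcc m (2 * k + 1)) := by
  ext y
  simp only [greenSet, greenInterval_eq_nIcc, mem_iUnion, mem_union]
  constructor
  · rintro ⟨k, hk⟩
    cases hb : b k
    · exact Or.inl ⟨k, hb, by rw [hb] at hk; simpa using hk⟩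
    · exact Or.inr ⟨k, hb, by rw [hb] at hk; simpa using hk⟩
  · rintro (⟨k, hb, hk⟩ | ⟨k, hb, hk⟩) <;> exact ⟨k, by rw [hb]; simpa using hk⟩

/-- **Preliminary for detection.** For a continuous probability density `f` on `ℝ` and any
`ε > 0`, there is `m₀` such that for all `m ≥ m₀` and every admissible green list (one
interval from each of the `m` pairs), the probability that a random variable with density
`f` has fractional part in the green list is within `2ε` of `1/2`. -/
theorem prob_fract_green_tendsto_half (f : ℝ → ℝ) (hf_cont : Continuous f)
    (hf_nonneg : ∀ x, 0 ≤ f x)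
    (hf_int : ∫ x, f x = 1) :
    ∀ ε > (0 : ℝ), ∃ m₀ : ℕ, ∀ m ≥ m₀, ∀ b : Fin m → Bool,
      |((volume.withDensity fun x => ENNReal.ofReal (f x))
          {x : ℝ | Int.fract x ∈ greenSet m b}).toReal - 1 / 2| < 2 * ε := by
  intro ε hε
  have hf_i : Integrable f := by
    by_contra hni
    rw [integral_undef hni] at hf_int
    norm_num at hf_int
  have hnn : 0 ≤ᵐ[volume] f := Filter.Eventually.of_forall hf_nonneg
  obtain ⟨δ, hδpos, hδ⟩ := l1_translate_cont hf_i hε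
  obtain ⟨m₁, hm₁⟩ := exists_nat_gt (1 / (2 * δ))
  refine ⟨max 1 m₁, fun m hm b => ?_⟩
  have hm1 : 1 ≤ m := le_trans (le_max_left _ _) hm
  have hmm : (0 : ℝ) < m := by exact_mod_cast hm1
  set h : ℝ := 1 / (2 * m) with hdef
  have hh0 : 0 < h := by positivity
  have hh1 : h < 1 := by
    rw [hdef, div_lt_one (by positivity)]
    have : (1:ℝ) ≤ m := by exact_mod_cast hm1
    linarith
  have hhδ : |h| ≤ δ := by
    rw [abs_of_pos hh0, hdef, div_le_iff₀ (by positivity)]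
    have h1 : (m₁ : ℝ) ≤ m := by exact_mod_cast le_trans (le_max_right _ _) hm
    rw [div_lt_iff₀ (by positivity)] at hm₁
    nlinarith
  set μ := volume.withDensity fun x => ENNReal.ofReal (f x) with hμdef
  have habs : μ ≪ volume := withDensity_absolutelyContinuous _ _
  have hμuniv : μ univ = 1 := by
    rw [hμdef, withDensity_apply _ MeasurableSet.univ, Measure.restrict_univ,
      ← ofReal_integral_eq_lintegral_ofReal hf_i hnn, hf_int, ENNReal.ofReal_one]
  have hfin : ∀ T : Set ℝ, μ T ≠ ⊤ := fun T =>
    ((measure_mono (subset_univ T)).trans_lt (by rw [hμuniv]; exact ENNReal.one_lt_top)).ne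
  have hrep : ∀ T : Set ℝ, MeasurableSet T → (μ T).toReal = ∫ x in T, f x := by
    intro T hT
    rw [hμdef, withDensity_apply _ hT]
    exact (integral_eq_lintegral_of_nonneg_ae (ae_restrict_of_ae hnn)
      hf_cont.aestronglyMeasurable.restrict).symm
  -- the pieces
  set b' : Fin m → Bool := fun k => !(b k) with hb'def
  set GA : Set ℝ := ⋃ k : Fin m, ⋃ (_ : b k = false), nIcc m (2 * k) with hGAdef
  set GB : Set ℝ := ⋃ k : Fin m, ⋃ (_ : b k = true), nIcc m (2 * k + 1) with hGBdef
  set GA' : Set ℝ := ⋃ k : Fin m, ⋃ (_ : b k = false), nIcc m (2 * k + 1) with hGA'def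
  set GB' : Set ℝ := ⋃ k : Fin m, ⋃ (_ : b k = true), nIcc m (2 * k) with hGB'def
  have hsplit : greenSet m b = GA ∪ GB := by
    rw [greenSet_eq_union m b]
  have hsplit' : greenSet m b' = GB' ∪ GA' := by
    rw [greenSet_eq_union m b']
    congr 1
    · rw [hGB'def]
      apply iUnion_congr; intro k
      cases hb : b k <;> simp [hb'def, hb]
    · rw [hGA'def]
      apply iUnion_congr; intro k
      cases hb : b k <;> simp [hb'def, hb]
  set S : Set ℝ := {x : ℝ | Int.fract x ∈ greenSet m b} with hSdef
  set S' : Set ℝ := {x : ℝ | Int.fract x ∈ greenSet m b'} with hS'def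
  set SA : Set ℝ := Int.fract ⁻¹' GA with hSAdef
  set SB : Set ℝ := Int.fract ⁻¹' GB with hSBdef
  set SA' : Set ℝ := Int.fract ⁻¹' GA' with hSA'def
  set SB' : Set ℝ := Int.fract ⁻¹' GB' with hSB'def
  -- measurability
  have hGAm : MeasurableSet GA := MeasurableSet.iUnion fun k => MeasurableSet.iUnion fun _ => measurable_nIcc m _
  have hGBm : MeasurableSet GB := MeasurableSet.iUnion fun k => MeasurableSet.iUnion fun _ => measurable_nIcc m _
  have hGA'm : MeasurableSet GA' := MeasurableSet.iUnion fun k => MeasurableSet.iUnion fun _ => measurable_nIcc m _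
  have hGB'm : MeasurableSet GB' := MeasurableSet.iUnion fun k => MeasurableSet.iUnion fun _ => measurable_nIcc m _
  have hSAm : MeasurableSet SA := measurable_fract hGAm
  have hSBm : MeasurableSet SB := measurable_fract hGBm
  have hSA'm : MeasurableSet SA' := measurable_fract hGA'm
  have hSB'm : MeasurableSet SB' := measurable_fract hGB'm
  have hSm : MeasurableSet S := by
    rw [hSdef, show {x : ℝ | Int.fract x ∈ greenSet m b} = Int.fract ⁻¹' greenSet m b from rfl,
      hsplit, preimage_union]
    exact hSAm.union hSBm
  have hS'm : MeasurableSet S' := by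
    rw [hS'def, show {x : ℝ | Int.fract x ∈ greenSet m b'} = Int.fract ⁻¹' greenSet m b' from rfl,
      hsplit', preimage_union]
    exact hSB'm.union hSA'm
  -- null intersections
  have hABnull : μ (SA ∩ SB) = 0 := by
    apply habs
    rw [hSAdef, hSBdef, ← preimage_inter]
    refine measure_mono_null (preimage_mono fun y hy => ?_) (volume_fract_preimage_zero (grid_countable m))
    obtain ⟨hy1, hy2⟩ := hy
    rw [hGAdef] at hy1; rw [hGBdef] at hy2
    simp only [mem_iUnion] at hy1 hy2
    obtain ⟨k, hbk, hk⟩ := hy1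
    obtain ⟨k', hbk', hk'⟩ := hy2
    exact grid_inter hmm (by omega) hk hk'
  have hA'B'null : μ (SA' ∩ SB') = 0 := by
    apply habs
    rw [hSA'def, hSB'def, ← preimage_inter]
    refine measure_mono_null (preimage_mono fun y hy => ?_) (volume_fract_preimage_zero (grid_countable m))
    obtain ⟨hy1, hy2⟩ := hy
    rw [hGA'def] at hy1; rw [hGB'def] at hy2
    simp only [mem_iUnion] at hy1 hy2
    obtain ⟨k, hbk, hk⟩ := hy1
    obtain ⟨k', hbk', hk'⟩ := hy2
    exact grid_inter hmm (by omega) hk hk'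
  have hSS'null : μ (S ∩ S') = 0 := by
    apply habs
    rw [hSdef, hS'def,
      show {x : ℝ | Int.fract x ∈ greenSet m b} ∩ {x : ℝ | Int.fract x ∈ greenSet m b'}
        = Int.fract ⁻¹' (greenSet m b ∩ greenSet m b') from rfl]
    refine measure_mono_null (preimage_mono fun y hy => ?_) (volume_fract_preimage_zero (grid_countable m))
    obtain ⟨hy1, hy2⟩ := hy
    simp only [greenSet, greenInterval_eq_nIcc, mem_iUnion] at hy1 hy2
    obtain ⟨k, hk⟩ := hy1
    obtain ⟨k', hk'⟩ := hy2
    refine grid_inter hmm ?_ hk hk'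
    by_cases hkk : k = k'
    · subst hkk
      cases hb1 : b k <;>
        simp only [hb'def, hb1, Bool.not_true, Bool.not_false, cond_true, cond_false] <;> omega
    · have hne : (k : ℕ) ≠ (k' : ℕ) := fun e => hkk (Fin.ext e)
      cases hb1 : b k <;> cases hb2 : b k' <;>
        simp only [hb'def, hb1, hb2, Bool.not_true, Bool.not_false, cond_true, cond_false] <;>
        omega
  -- coverage
  have hcover : S ∪ S' = univ := by
    rw [eq_univ_iff_forall]
    intro x
    have hy0 : 0 ≤ Int.fract x := Int.fract_nonneg x
    have hy1 : Int.fract x < 1 := Int.fract_lt_one x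
    have hk₀lt : ⌊(m : ℝ) * Int.fract x⌋₊ < m := by
      rw [Nat.floor_lt (by positivity)]
      nlinarith
    set k : Fin m := ⟨⌊(m : ℝ) * Int.fract x⌋₊, hk₀lt⟩ with hkdef
    have hle : ((k : ℕ) : ℝ) ≤ m * Int.fract x := Nat.floor_le (by positivity)
    have hlt : (m : ℝ) * Int.fract x < (k : ℕ) + 1 := Nat.lt_floor_add_one _
    have hlo : ((2 * (k : ℕ) : ℕ) : ℝ) / (2 * m) ≤ Int.fract x := by
      push_cast
      rw [div_le_iff₀ (by positivity)]
      nlinarith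
    have hhi : Int.fract x ≤ (((2 * (k : ℕ) + 1 : ℕ) : ℝ) + 1) / (2 * m) := by
      push_cast
      rw [le_div_iff₀ (by positivity)]
      nlinarith
    have hmemor : Int.fract x ∈ nIcc m (2 * (k : ℕ)) ∨ Int.fract x ∈ nIcc m (2 * (k : ℕ) + 1) := by
      rcases le_total (Int.fract x) (((2 * (k : ℕ) + 1 : ℕ) : ℝ) / (2 * m)) with hc | hc
      · left
        refine ⟨hlo, ?_⟩
        convert hc using 2
        push_cast; ring
      · right
        refine ⟨hc, hhi⟩
    have hgreen : ∀ (c : Fin m → Bool) (o : ℕ), c k = (if o = 1 then true else false) → o = 0 ∨ o = 1 →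
        Int.fract x ∈ nIcc m (2 * (k : ℕ) + o) → Int.fract x ∈ greenSet m c := by
      intro c o hco ho hmem
      simp only [greenSet, greenInterval_eq_nIcc, mem_iUnion]
      refine ⟨k, ?_⟩
      rcases ho with ho | ho <;> rw [ho] at hco hmem <;> rw [hco] <;> simpa using hmem
    rcases hmemor with hmem | hmem
    · cases hb : b k
      · left
        exact hgreen b 0 (by simp [hb]) (Or.inl rfl) (by simpa using hmem)
      · right
        exact hgreen b' 0 (by simp [hb'def, hb]) (Or.inl rfl) (by simpa using hmem)
    · cases hb : b k
      · right
        exact hgreen b' 1 (by simp [hb'def, hb]) (Or.inr rfl) hmem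
      · left
        exact hgreen b 1 (by simp [hb]) (Or.inr rfl) hmem
  -- measure identities
  have key1 : μ S + μ S' = 1 := by
    have e := measure_union_add_inter (μ := μ) S hS'm
    rw [hcover, hμuniv, hSS'null, add_zero] at e
    exact e.symm
  have key2 : μ S = μ SA + μ SB := by
    have e := measure_union_add_inter (μ := μ) SA hSBm
    rw [hABnull, add_zero] at e
    rw [hSdef, show {x : ℝ | Int.fract x ∈ greenSet m b} = Int.fract ⁻¹' greenSet m b from rfl,
      hsplit, preimage_union, ← hSAdef, ← hSBdef, e]
  have key3 : μ S' = μ SB' + μ SA' := by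
    have e := measure_union_add_inter (μ := μ) SB' hSA'm
    rw [inter_comm] at e
    rw [hA'B'null, add_zero] at e
    rw [hS'def, show {x : ℝ | Int.fract x ∈ greenSet m b'} = Int.fract ⁻¹' greenSet m b' from rfl,
      hsplit', preimage_union, ← hSB'def, ← hSA'def, e]
  -- subsets for the shift lemma
  have hsubA' : GA' ⊆ Icc h 1 := by
    rw [hGA'def]
    refine iUnion_subset fun k => iUnion_subset fun _ => ?_
    rw [hdef]
    exact nIcc_subset_Icc hmm (by omega) (by have := k.isLt; omega)
  have hsubB : GB ⊆ Icc h 1 := by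
    rw [hGBdef]
    refine iUnion_subset fun k => iUnion_subset fun _ => ?_
    rw [hdef]
    exact nIcc_subset_Icc hmm (by omega) (by have := k.isLt; omega)
  -- translation identities
  have eA : (μ SA').toReal = ∫ x in SA, f (x + h) := by
    have hshift := fract_shift_ae hh0 hh1 hsubA'
    have hseteq : {x : ℝ | Int.fract x + h ∈ GA'} = SA := by
      ext y
      rw [hSAdef]
      simp only [mem_setOf_eq, mem_preimage, hGAdef, hGA'def, mem_iUnion]
      refine exists_congr fun k => exists_congr fun _ => ?_
      rw [hdef]
      exact mem_nIcc_add m (2 * k) (Int.fract y)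
    rw [hrep _ hSA'm, ← setIntegral_comp_add_right' f hSA'm h]
    refine setIntegral_congr_set ?_
    rw [← hseteq]
    exact hshift.symm
  have eB : (μ SB').toReal = ∫ x in SB, f (x - h) := by
    have hshift := fract_shift_ae hh0 hh1 hsubB
    have hseteq : {x : ℝ | Int.fract x + h ∈ GB} = SB' := by
      ext y
      rw [hSB'def]
      simp only [mem_setOf_eq, mem_preimage, hGBdef, hGB'def, mem_iUnion]
      refine exists_congr fun k => exists_congr fun _ => ?_
      rw [hdef]
      exact mem_nIcc_add m (2 * k) (Int.fract y)
    have hcv := setIntegral_comp_add_right' (fun x => f (x - h)) hSBm h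
    simp only [add_sub_cancel_right] at hcv
    rw [hrep _ hSB'm, ← hcv]
    refine setIntegral_congr_set ?_
    rw [← hseteq]
    exact hshift
  -- integrability
  have hintA1 : IntegrableOn f SA := hf_i.integrableOn
  have hintA2 : IntegrableOn (fun x => f (x + h)) SA := (hf_i.comp_add_right h).integrableOn
  have hintB1 : IntegrableOn f SB := hf_i.integrableOn
  have hintB2 : IntegrableOn (fun x => f (x - h)) SB := (hf_i.comp_sub_right h).integrableOn
  -- the translation bounds
  have hbA : |∫ x in SA, (f x - f (x + h))| < ε := by
    calc |∫ x in SA, (f x - f (x + h))| ≤ ∫ x in SA, |f x - f (x + h)| := by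
          simpa [Real.norm_eq_abs] using
            norm_integral_le_integral_norm (μ := volume.restrict SA) (fun x => f x - f (x + h))
      _ ≤ ∫ x, |f x - f (x + h)| :=
          setIntegral_le_integral ((hf_i.sub (hf_i.comp_add_right h)).abs)
            (Filter.Eventually.of_forall fun x => abs_nonneg _)
      _ = ∫ x, |f (x + h) - f x| :=
          integral_congr_ae (Filter.Eventually.of_forall fun x => abs_sub_comm _ _)
      _ < ε := hδ h hhδ
  have hbB : |∫ x in SB, (f x - f (x - h))| < ε := by
    have h2 := hδ (-h) (by rw [abs_neg]; exact hhδ)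
    simp only [← sub_eq_add_neg] at h2
    calc |∫ x in SB, (f x - f (x - h))| ≤ ∫ x in SB, |f x - f (x - h)| := by
          simpa [Real.norm_eq_abs] using
            norm_integral_le_integral_norm (μ := volume.restrict SB) (fun x => f x - f (x - h))
      _ ≤ ∫ x, |f x - f (x - h)| :=
          setIntegral_le_integral ((hf_i.sub (hf_i.comp_sub_right h)).abs)
            (Filter.Eventually.of_forall fun x => abs_nonneg _)
      _ = ∫ x, |f (x - h) - f x| :=
          integral_congr_ae (Filter.Eventually.of_forall fun x => abs_sub_comm _ _)
      _ < ε := h2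
  -- real arithmetic
  have keyR1 : (μ S).toReal + (μ S').toReal = 1 := by
    rw [← ENNReal.toReal_add (hfin _) (hfin _), key1, ENNReal.toReal_one]
  have keyR2 : (μ S).toReal = (∫ x in SA, f x) + ∫ x in SB, f x := by
    rw [key2, ENNReal.toReal_add (hfin _) (hfin _), hrep _ hSAm, hrep _ hSBm]
  have keyR3 : (μ S').toReal = (∫ x in SB, f (x - h)) + ∫ x in SA, f (x + h) := by
    rw [key3, ENNReal.toReal_add (hfin _) (hfin _), eA, eB]
  have hsub1 : ∫ x in SA, (f x - f (x + h)) = (∫ x in SA, f x) - ∫ x in SA, f (x + h) :=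
    integral_sub hintA1 hintA2
  have hsub2 : ∫ x in SB, (f x - f (x - h)) = (∫ x in SB, f x) - ∫ x in SB, f (x - h) :=
    integral_sub hintB1 hintB2
  have hdiff : |(μ S).toReal - (μ S').toReal| < 2 * ε := by
    rw [keyR2, keyR3, show (∫ x in SA, f x) + (∫ x in SB, f x)
        - ((∫ x in SB, f (x - h)) + ∫ x in SA, f (x + h))
        = ((∫ x in SA, f x) - ∫ x in SA, f (x + h))
          + ((∫ x in SB, f x) - ∫ x in SB, f (x - h)) from by ring, ← hsub1, ← hsub2]
    calc |_| ≤ |∫ x in SA, (f x - f (x + h))| + |∫ x in SB, (f x - f (x - h))| := abs_add_le _ _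
      _ < 2 * ε := by linarith
  rw [abs_lt] at hdiff ⊢
  constructor <;> linarith [hdiff.1, hdiff.2]
end

section
/- Let F be a p-dimensional probability distribution with continuous joint density (not necessarily compactly supported). For each coordinate i, let A_i be either {x_i − ⌊x_i⌋ ∈ G} or {x_i − ⌊x_i⌋ ∉ G}. Then as m → ∞, P_{x∼F}(∩_{i=1}^p A_i) → (1/2)^p; in particular, the events of each coordinate's fractional part falling in the green list are asymptotically independent. -/
open MeasureTheory Set Filter

namespace AsympIndepAux

/-! ### One-dimensional combinatorial facts -/

lemma two_m_pos {m : ℕ} (hm : 1 ≤ m) : (0:ℝ) < 2 * m := by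
  have h : (1:ℝ) ≤ (m:ℝ) := by exact_mod_cast hm
  linarith

lemma mul_shift {m : ℕ} (hm : 1 ≤ m) (t : ℝ) :
    2 * (m:ℝ) * (t + 1 / (2 * m)) = 2 * m * t + 1 := by
  have hm0 : (m:ℝ) ≠ 0 := Nat.cast_ne_zero.mpr (by omega)
  field_simp

lemma floor_shift {m : ℕ} (hm : 1 ≤ m) (t : ℝ) :
    ⌊2 * (m:ℝ) * (t + 1 / (2 * m))⌋ = ⌊2 * (m:ℝ) * t⌋ + 1 := by
  rw [mul_shift hm]
  simpa using Int.floor_add_int (2 * (m:ℝ) * t) 1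

lemma mul_shift_neg {m : ℕ} (hm : 1 ≤ m) (t : ℝ) :
    2 * (m:ℝ) * (t - 1 / (2 * m)) = 2 * m * t - 1 := by
  have hm0 : (m:ℝ) ≠ 0 := Nat.cast_ne_zero.mpr (by omega)
  field_simp

lemma floor_shift_neg {m : ℕ} (hm : 1 ≤ m) (t : ℝ) :
    ⌊2 * (m:ℝ) * (t - 1 / (2 * m))⌋ = ⌊2 * (m:ℝ) * t⌋ - 1 := by
  rw [mul_shift_neg hm]
  simpa using Int.floor_sub_int (2 * (m:ℝ) * t) 1

lemma floor_eq_iff_aux {m : ℕ} (hm : 1 ≤ m) {u : ℝ}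
    (hirr : ∀ z : ℤ, (z:ℝ) ≠ 2 * m * u) (c : ℤ) :
    ((c:ℝ) / (2*m) ≤ u ∧ u ≤ ((c:ℝ)+1) / (2*m)) ↔ ⌊2 * (m:ℝ) * u⌋ = c := by
  have h2m : (0:ℝ) < 2 * m := two_m_pos hm
  constructor
  · rintro ⟨h1, h2⟩
    rw [div_le_iff₀ h2m] at h1
    rw [le_div_iff₀ h2m] at h2
    have l1 : (c:ℝ) ≤ 2*m*u := by nlinarith
    have l2 : 2*m*u ≤ (c:ℝ)+1 := by nlinarith
    have l2' : 2*m*u < (c:ℝ)+1 := by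
      rcases lt_or_eq_of_le l2 with h | h
      · exact h
      · exact absurd (by push_cast; linarith : ((c+1 : ℤ):ℝ) = 2*m*u) (hirr (c+1))
    rw [Int.floor_eq_iff]
    exact ⟨l1, by push_cast; linarith⟩
  · intro h
    have l1 : (c:ℝ) ≤ 2*m*u := by rw [← h]; exact Int.floor_le _
    have l2 : 2*m*u < (c:ℝ)+1 := by
      have := Int.lt_floor_add_one (2 * (m:ℝ) * u)
      rw [h] at this
      push_cast at this ⊢
      linarith
    constructor
    · rw [div_le_iff₀ h2m]; nlinarith
    · rw [le_div_iff₀ h2m]; nlinarith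

lemma mem_greenSet_iff {m : ℕ} (hm : 1 ≤ m) (bb : Fin m → Bool) {u : ℝ}
    (hirr : ∀ z : ℤ, (z:ℝ) ≠ 2 * m * u) :
    u ∈ greenSet m bb ↔
      ∃ k : Fin m, ⌊2 * (m:ℝ) * u⌋ = 2 * (k:ℤ) + (if bb k then 1 else 0) := by
  simp only [greenSet, greenInterval, mem_iUnion, mem_Icc]
  refine exists_congr fun k => ?_
  have hc : (((2 * (k:ℤ) + (if bb k then 1 else 0) : ℤ)):ℝ)
      = 2 * (k:ℝ) + (if bb k then 1 else 0) := by
    cases bb k <;> push_cast <;> ring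
  rw [← hc]
  exact floor_eq_iff_aux hm hirr _

/-- The one-dimensional "cell flip" map. -/
noncomputable def tau (m : ℕ) (t : ℝ) : ℝ :=
  if Even ⌊2 * (m : ℝ) * t⌋ then t + 1 / (2 * m) else t - 1 / (2 * m)

lemma fract_irr {m : ℕ} {t : ℝ} (hirr : ∀ z : ℤ, (z:ℝ) ≠ 2 * m * t) :
    ∀ z : ℤ, (z:ℝ) ≠ 2 * m * Int.fract t := by
  intro z hz
  apply hirr (z + 2*m*⌊t⌋)
  have hfr : Int.fract t = t - ⌊t⌋ := rfl
  rw [hfr] at hz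
  push_cast
  linarith

lemma floor_decomp {m : ℕ} (t : ℝ) :
    ⌊2 * (m:ℝ) * t⌋ = 2 * m * ⌊t⌋ + ⌊2 * (m:ℝ) * Int.fract t⌋ := by
  have h : 2 * (m:ℝ) * t = 2 * (m:ℝ) * Int.fract t + ((2 * m * ⌊t⌋ : ℤ) : ℝ) := by
    have hfr : Int.fract t = t - ⌊t⌋ := rfl
    rw [hfr]; push_cast; ring
  rw [h, Int.floor_add_intCast]
  ring

lemma floor_fract_parity {m : ℕ} (t : ℝ) :
    (Even ⌊2 * (m:ℝ) * t⌋ ↔ Even ⌊2 * (m:ℝ) * Int.fract t⌋) := by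
  rw [floor_decomp (m := m) t, Int.even_add]
  have h2 : Even (2 * (m:ℤ) * ⌊t⌋) := ⟨(m:ℤ) * ⌊t⌋, by ring⟩
  simp [h2]

/-- Key flip property: applying `tau` flips membership of the fractional part
in the green set, away from the grid. -/
theorem fract_tau_flip {m : ℕ} (hm : 1 ≤ m) (bb : Fin m → Bool) {t : ℝ}
    (hirr : ∀ z : ℤ, (z:ℝ) ≠ 2 * m * t) :
    (Int.fract (tau m t) ∈ greenSet m bb ↔ Int.fract t ∉ greenSet m bb) := by
  have h2m : (0:ℝ) < 2 * m := two_m_pos hm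
  set u := Int.fract t with hu
  have hu0 : 0 ≤ u := Int.fract_nonneg t
  have hu1 : u < 1 := Int.fract_lt_one t
  have hirru := fract_irr (m := m) hirr
  set j := ⌊2 * (m:ℝ) * u⌋ with hj
  have hj0 : 0 ≤ j := Int.floor_nonneg.mpr (by positivity)
  have hjlt : j < 2 * m := by
    rw [hj]
    rw [Int.floor_lt]
    push_cast
    nlinarith
  have hlow : (j:ℝ) ≤ 2*m*u := Int.floor_le _
  have hlow' : (j:ℝ) < 2*m*u := lt_of_le_of_ne hlow (hirru j)
  have hhigh : 2*m*u < (j:ℝ)+1 := by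
    have h := Int.lt_floor_add_one (2 * (m:ℝ) * u)
    rw [← hj] at h
    exact_mod_cast h
  have hparity := floor_fract_parity (m := m) t
  have hfract : Int.fract t = t - ⌊t⌋ := rfl
  by_cases hev : Even j
  · -- even case : tau m t = t + 1/(2m)
    have htau : tau m t = t + 1 / (2*m) := by
      rw [tau, if_pos (hparity.mpr hev)]
    have hj2 : j ≤ 2*m - 2 := by
      rcases hev with ⟨a, ha⟩; omega
    have hj2R : (j:ℝ) ≤ 2*m - 2 := by exact_mod_cast hj2
    have hsum1 : u + 1/(2*m) < 1 := by
      have h1 : 2*(m:ℝ)*(u + 1/(2*m)) < 2*m := by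
        rw [mul_shift hm]
        linarith
      nlinarith
    have hfl : ⌊t + 1/(2*m)⌋ = ⌊t⌋ := by
      have ht : t = ⌊t⌋ + u := by rw [hu, hfract]; ring
      have hpos : (0:ℝ) < 1/(2*m) := by positivity
      rw [Int.floor_eq_iff]
      refine ⟨by linarith [Int.floor_le t], ?_⟩
      push_cast
      linarith [hsum1, ht]
    have hufr : Int.fract (t + 1/(2*m)) = u + 1/(2*m) := by
      have : Int.fract (t + 1/(2*m)) = t + 1/(2*m) - ⌊t + 1/(2*m)⌋ := rfl
      rw [this, hfl, hu, hfract]; ring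
    have hirr2 : ∀ z : ℤ, (z:ℝ) ≠ 2 * m * (u + 1/(2*m)) := by
      intro z hz
      rw [mul_shift hm] at hz
      exact hirru (z - 1) (by push_cast; linarith)
    rw [htau, hufr, mem_greenSet_iff hm bb hirr2, mem_greenSet_iff hm bb hirru]
    rw [floor_shift hm u, ← hj]
    -- goal : (∃ k, j + 1 = 2k+δ) ↔ ¬ ∃ k, j = 2k+δ
    obtain ⟨a, ha⟩ := hev
    set k0 : Fin m := ⟨a.toNat, by omega⟩ with hk0def
    have hk0 : (k0:ℤ) = a := by
      simp only [hk0def]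
      omega
    constructor
    · rintro ⟨k, hk⟩ ⟨k', hk'⟩
      have hbk : bb k = true := by
        by_contra hb
        rw [Bool.not_eq_true] at hb
        rw [hb] at hk
        simp at hk
        omega
      rw [hbk] at hk
      simp at hk
      have hbk' : bb k' = false := by
        by_contra hb
        rw [Bool.not_eq_false] at hb
        rw [hb] at hk'
        simp at hk'
        omega
      rw [hbk'] at hk'
      simp at hk'
      have hkk' : (k:ℤ) = (k':ℤ) := by omega
      have hkk : k = k' := Fin.ext (by exact_mod_cast hkk')
      rw [hkk, hbk'] at hbk
      simp at hbk
    · intro hne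
      have hbk0 : bb k0 = true := by
        by_contra hb
        rw [Bool.not_eq_true] at hb
        exact hne ⟨k0, by rw [hb]; simp; omega⟩
      exact ⟨k0, by rw [hbk0]; simp; omega⟩
  · -- odd case : tau m t = t - 1/(2m)
    have htau : tau m t = t - 1 / (2*m) := by
      rw [tau, if_neg (fun h => hev (hparity.mp h))]
    have hodd : Odd j := Int.not_even_iff_odd.mp hev
    obtain ⟨a, ha⟩ := hodd
    have hj1 : 1 ≤ j := by omega
    have hj1R : (1:ℝ) ≤ (j:ℝ) := by exact_mod_cast hj1
    have hup : 1/(2*m) < u := by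
      rw [div_lt_iff₀ h2m]
      nlinarith
    have hfl : ⌊t - 1/(2*m)⌋ = ⌊t⌋ := by
      have ht : t = ⌊t⌋ + u := by rw [hu, hfract]; ring
      have hpos : (0:ℝ) < 1/(2*m) := by positivity
      rw [Int.floor_eq_iff]
      refine ⟨?_, ?_⟩
      · push_cast
        linarith [hup]
      · push_cast
        linarith [hu1, hpos]
    have hufr : Int.fract (t - 1/(2*m)) = u - 1/(2*m) := by
      have : Int.fract (t - 1/(2*m)) = t - 1/(2*m) - ⌊t - 1/(2*m)⌋ := rfl
      rw [this, hfl, hu, hfract]; ring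
    have hirr2 : ∀ z : ℤ, (z:ℝ) ≠ 2 * m * (u - 1/(2*m)) := by
      intro z hz
      rw [mul_shift_neg hm] at hz
      exact hirru (z + 1) (by push_cast; linarith)
    rw [htau, hufr, mem_greenSet_iff hm bb hirr2, mem_greenSet_iff hm bb hirru]
    rw [floor_shift_neg hm u, ← hj]
    set k0 : Fin m := ⟨a.toNat, by omega⟩ with hk0def
    have hk0 : (k0:ℤ) = a := by
      simp only [hk0def]
      omega
    constructor
    · rintro ⟨k, hk⟩ ⟨k', hk'⟩
      have hbk : bb k = false := by
        by_contra hb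
        rw [Bool.not_eq_false] at hb
        rw [hb] at hk
        simp at hk
        omega
      rw [hbk] at hk
      simp at hk
      have hbk' : bb k' = true := by
        by_contra hb
        rw [Bool.not_eq_true] at hb
        rw [hb] at hk'
        simp at hk'
        omega
      rw [hbk'] at hk'
      simp at hk'
      have hkk' : (k:ℤ) = (k':ℤ) := by omega
      have hkk : k = k' := Fin.ext (by exact_mod_cast hkk')
      rw [hkk, hbk'] at hbk
      simp at hbk
    · intro hne
      have hbk0 : bb k0 = false := by
        by_contra hb
        rw [Bool.not_eq_false] at hb
        exact hne ⟨k0, by rw [hb]; simp; omega⟩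
      exact ⟨k0, by rw [hbk0]; simp; omega⟩

/-! ### The sets `T`, functions `chi` -/

def Tset (m : ℕ) (bb : Fin m → Bool) (c : Bool) : Set ℝ :=
  {t | Int.fract t ∈ greenSet m bb ↔ c = true}

noncomputable def chi (m : ℕ) (bb : Fin m → Bool) (c : Bool) : ℝ → ℝ :=
  (Tset m bb c).indicator 1

lemma measurableSet_greenSet (m : ℕ) (bb : Fin m → Bool) :
    MeasurableSet (greenSet m bb) :=
  MeasurableSet.iUnion fun _ => measurableSet_Icc

lemma measurableSet_Tset (m : ℕ) (bb : Fin m → Bool) (c : Bool) :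
    MeasurableSet (Tset m bb c) := by
  have h1 : MeasurableSet (Int.fract ⁻¹' greenSet m bb) :=
    measurable_fract (measurableSet_greenSet m bb)
  cases c
  · convert h1.compl using 1
    ext t; simp [Tset]
  · convert h1 using 1
    ext t; simp [Tset]

lemma measurable_chi (m : ℕ) (bb : Fin m → Bool) (c : Bool) :
    Measurable (chi m bb c) :=
  measurable_const.indicator (measurableSet_Tset m bb c)

lemma chi_nonneg (m : ℕ) (bb : Fin m → Bool) (c : Bool) (t : ℝ) :
    0 ≤ chi m bb c t :=
  Set.indicator_nonneg (fun _ _ => zero_le_one) t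

lemma chi_le_one (m : ℕ) (bb : Fin m → Bool) (c : Bool) (t : ℝ) :
    chi m bb c t ≤ 1 := by
  classical
  rw [chi, Set.indicator_apply]
  split <;> norm_num

lemma chi_of_mem {m : ℕ} {bb : Fin m → Bool} {c : Bool} {t : ℝ}
    (h : t ∈ Tset m bb c) : chi m bb c t = 1 := by
  simp [chi, Set.indicator_of_mem h]

lemma chi_of_not_mem {m : ℕ} {bb : Fin m → Bool} {c : Bool} {t : ℝ}
    (h : t ∉ Tset m bb c) : chi m bb c t = 0 := by
  simp [chi, Set.indicator_of_notMem h]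

lemma chi_flip {m : ℕ} (hm : 1 ≤ m) (bb : Fin m → Bool) (c : Bool) {t : ℝ}
    (hirr : ∀ z : ℤ, (z:ℝ) ≠ 2 * m * t) :
    chi m bb c (tau m t) = 1 - chi m bb c t := by
  classical
  have hflip := fract_tau_flip hm bb hirr
  have h1 : tau m t ∈ Tset m bb c ↔ ¬ (t ∈ Tset m bb c) := by
    simp only [Tset, mem_setOf_eq, hflip]
    constructor <;> intro h <;> by_cases hc : c = true <;> simp [hc] at h ⊢ <;> tauto
  by_cases ht : t ∈ Tset m bb c
  · rw [chi, Set.indicator_of_mem ht, Set.indicator_of_notMem (by rw [h1]; exact not_not_intro ht)]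
    simp
  · rw [chi, Set.indicator_of_notMem ht, Set.indicator_of_mem (h1.mpr ht)]
    simp

/-! ### The flip maps on `ℝ^p` -/

variable {p : ℕ}

/-- The shift vector in coordinate `i`. -/
noncomputable def vs (m : ℕ) (i : Fin p) : Fin p → ℝ := Pi.single i (1 / (2 * (m:ℝ)))

/-- The set of points whose `i`-th coordinate lies in an even cell. -/
def Aset (m : ℕ) (i : Fin p) : Set (Fin p → ℝ) := {x | Even ⌊2 * (m:ℝ) * x i⌋}

noncomputable instance (m : ℕ) (i : Fin p) (x : Fin p → ℝ) : Decidable (x ∈ Aset m i) :=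
  decidable_of_iff (⌊2 * (m:ℝ) * x i⌋ % 2 = 0) Int.even_iff.symm

/-- The coordinate-`i` flip map on `ℝ^p`. -/
noncomputable def sigma (m : ℕ) (i : Fin p) : (Fin p → ℝ) → (Fin p → ℝ) :=
  (Aset m i).piecewise (· + vs m i) (· + -vs m i)

lemma measurableSet_Aset (m : ℕ) (i : Fin p) : MeasurableSet (Aset m i) := by
  have h : Measurable fun x : Fin p → ℝ => ⌊2 * (m:ℝ) * x i⌋ :=
    (measurable_const.mul (measurable_pi_apply i)).floor
  exact h (show MeasurableSet {n : ℤ | Even n} from trivial)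

lemma vs_apply_self (m : ℕ) (i : Fin p) : vs m i i = 1 / (2 * (m:ℝ)) := by
  simp [vs]

lemma vs_apply_ne (m : ℕ) (i : Fin p) {j : Fin p} (hj : j ≠ i) : vs m i j = 0 := by
  simp [vs, Pi.single_eq_of_ne hj]

lemma sigma_apply_self (m : ℕ) (i : Fin p) (x : Fin p → ℝ) :
    sigma m i x i = tau m (x i) := by
  unfold sigma tau
  by_cases hx : x ∈ Aset m i
  · have hx' : Even ⌊2 * (m:ℝ) * x i⌋ := hx
    rw [Set.piecewise_eq_of_mem _ _ _ hx, if_pos hx']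
    simp [vs]
  · have hx' : ¬ Even ⌊2 * (m:ℝ) * x i⌋ := hx
    rw [Set.piecewise_eq_of_notMem _ _ _ hx, if_neg hx']
    simp [vs, sub_eq_add_neg]

lemma sigma_apply_ne (m : ℕ) (i : Fin p) (x : Fin p → ℝ) {j : Fin p} (hj : j ≠ i) :
    sigma m i x j = x j := by
  unfold sigma
  by_cases hx : x ∈ Aset m i
  · rw [Set.piecewise_eq_of_mem _ _ _ hx]
    simp [vs, Pi.single_eq_of_ne hj]
  · rw [Set.piecewise_eq_of_notMem _ _ _ hx]
    simp [vs, Pi.single_eq_of_ne hj]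

lemma measurable_sigma (m : ℕ) (i : Fin p) : Measurable (sigma m i) :=
  Measurable.piecewise (measurableSet_Aset m i) (measurable_add_const _) (measurable_add_const _)

lemma sigma_mem_flip {m : ℕ} (hm : 1 ≤ m) (i : Fin p) :
    ∀ x : Fin p → ℝ, x ∈ Aset m i ↔ x + vs m i ∉ Aset m i := by
  intro x
  have happ : (x + vs m i) i = x i + 1 / (2 * (m:ℝ)) := by simp [vs]
  show Even ⌊2 * (m:ℝ) * x i⌋ ↔ ¬ Even ⌊2 * (m:ℝ) * (x + vs m i) i⌋
  rw [happ, floor_shift hm (x i), Int.even_add_one, not_not]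

/-- A general measure-preservation lemma for two-piece translations. -/
theorem measurePreserving_piecewise_shift {G : Type*} [MeasurableSpace G] [AddCommGroup G]
    [MeasurableAdd G] (μ : Measure G) [μ.IsAddRightInvariant] {A : Set G}
    [∀ x, Decidable (x ∈ A)]
    (hA : MeasurableSet A) (v : G) (hAv : ∀ x, x ∈ A ↔ x + v ∉ A) :
    MeasurePreserving (A.piecewise (· + v) (· + -v)) μ μ := by
  have hmeas : Measurable (A.piecewise (· + v) (· + -v)) :=
    Measurable.piecewise hA (measurable_add_const v) (measurable_add_const (-v))
  refine ⟨hmeas, ?_⟩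
  refine Measure.ext fun S hS => ?_
  rw [Measure.map_apply hmeas hS]
  have h1 : A.piecewise (· + v) (· + -v) ⁻¹' S ∩ A = (· + v) ⁻¹' (S ∩ Aᶜ) := by
    ext x
    by_cases hx : x ∈ A
    · simp only [mem_inter_iff, mem_preimage, mem_compl_iff]
      have hp : A.piecewise (· + v) (· + -v) x = x + v := Set.piecewise_eq_of_mem _ _ _ hx
      rw [hp]
      have := (hAv x).mp hx
      tauto
    · simp only [mem_inter_iff, mem_preimage, mem_compl_iff]
      have hnv : ¬ (x + v ∉ A) := fun h => hx ((hAv x).mpr h)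
      tauto
  have h2 : A.piecewise (· + v) (· + -v) ⁻¹' S ∩ Aᶜ = (· + -v) ⁻¹' (S ∩ A) := by
    ext x
    by_cases hx : x ∈ A
    · simp only [mem_inter_iff, mem_preimage, mem_compl_iff]
      have hnv : x + -v ∉ A := by
        intro h
        have h' := (hAv (x + -v)).mp h
        simp only [neg_add_cancel_right] at h'
        exact h' hx
      tauto
    · simp only [mem_inter_iff, mem_preimage, mem_compl_iff]
      have hp : A.piecewise (· + v) (· + -v) x = x + -v := Set.piecewise_eq_of_notMem _ _ _ hx
      rw [hp]
      have hv : x + -v ∈ A := by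
        by_contra h
        exact h ((hAv (x + -v)).mpr (by simpa using hx))
      tauto
  calc μ (A.piecewise (· + v) (· + -v) ⁻¹' S)
      = μ (A.piecewise (· + v) (· + -v) ⁻¹' S ∩ A)
        + μ (A.piecewise (· + v) (· + -v) ⁻¹' S \ A) :=
        (measure_inter_add_diff _ hA).symm
    _ = μ ((· + v) ⁻¹' (S ∩ Aᶜ)) + μ ((· + -v) ⁻¹' (S ∩ A)) := by
        rw [diff_eq, h1, h2]
    _ = μ (S ∩ Aᶜ) + μ (S ∩ A) := by
        rw [measure_preimage_add_right, measure_preimage_add_right]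
    _ = μ S := by
        rw [add_comm, ← diff_eq, measure_inter_add_diff S hA]

lemma measurePreserving_sigma {m : ℕ} (hm : 1 ≤ m) (i : Fin p) :
    MeasurePreserving (sigma m i) (volume : Measure (Fin p → ℝ)) volume :=
  measurePreserving_piecewise_shift volume (measurableSet_Aset m i) _ (sigma_mem_flip hm i)

lemma sigma_involutive {m : ℕ} (hm : 1 ≤ m) (i : Fin p) :
    Function.Involutive (sigma m i) := by
  intro x
  have hAv := sigma_mem_flip hm i
  by_cases hx : x ∈ Aset m i
  · have h1 : sigma m i x = x + vs m i := Set.piecewise_eq_of_mem _ _ _ hx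
    have h2 : x + vs m i ∉ Aset m i := (hAv x).mp hx
    rw [h1]
    unfold sigma
    rw [Set.piecewise_eq_of_notMem _ _ _ h2]
    abel
  · have h1 : sigma m i x = x + -vs m i := Set.piecewise_eq_of_notMem _ _ _ hx
    have h2 : x + -vs m i ∈ Aset m i := by
      by_contra h
      exact h ((hAv (x + -vs m i)).mpr (by simpa using hx))
    rw [h1]
    unfold sigma
    rw [Set.piecewise_eq_of_mem _ _ _ h2]
    abel

noncomputable def sigmaEquiv (m : ℕ) (hm : 1 ≤ m) (i : Fin p) :
    (Fin p → ℝ) ≃ᵐ (Fin p → ℝ) where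
  toEquiv := Function.Involutive.toPerm _ (sigma_involutive hm i)
  measurable_toFun := measurable_sigma m i
  measurable_invFun := measurable_sigma m i

lemma ae_irr (m : ℕ) (hm : 1 ≤ m) (i : Fin p) :
    ∀ᵐ x : Fin p → ℝ, ∀ z : ℤ, (z:ℝ) ≠ 2 * m * x i := by
  have h2m : (0:ℝ) < 2 * m := two_m_pos hm
  set N : Set ℝ := {t : ℝ | ∃ z : ℤ, (z:ℝ) = 2 * m * t} with hN
  have hNnull : (volume : Measure ℝ) N = 0 := by
    have hsub : N ⊆ Set.range (fun z : ℤ => (z:ℝ) / (2*m)) := by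
      rintro t ⟨z, hz⟩
      exact ⟨z, by field_simp [hz]; exact hz⟩
    exact measure_mono_null hsub ((Set.countable_range _).measure_zero _)
  rw [ae_iff]
  have hset : {x : Fin p → ℝ | ¬ ∀ z : ℤ, (z:ℝ) ≠ 2 * m * x i}
      = Function.eval i ⁻¹' N := by
    ext x
    simp [hN, Function.eval]
  rw [hset]
  have : (volume : Measure (Fin p → ℝ)) = Measure.pi fun _ => volume := rfl
  rw [this]
  exact Measure.pi_eval_preimage_null _ hNnull

/-! ### Integrability helpers -/

lemma integrable_mul_bdd {f : (Fin p → ℝ) → ℝ} (hfi : Integrable f)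
    {g : (Fin p → ℝ) → ℝ} (hg : Measurable g) (hg0 : ∀ x, 0 ≤ g x)
    (hg1 : ∀ x, g x ≤ 1) : Integrable (fun x => f x * g x) := by
  have h := Integrable.bdd_mul hfi hg.aestronglyMeasurable
    (c := 1) (ae_of_all _ fun x => by rw [Real.norm_eq_abs, abs_of_nonneg (hg0 x)]; exact hg1 x)
  exact h.congr (ae_of_all _ fun x => mul_comm _ _)

/-! ### The main estimate -/

theorem main_est (p : ℕ) (f : (Fin p → ℝ) → ℝ) (hfi : Integrable f)
    (m : ℕ) (hm : 1 ≤ m) (bb : Fin m → Bool) (s : Fin p → Bool)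
    (S : Finset (Fin p)) :
    |(∫ x, f x * ∏ i ∈ S, chi m bb (s i) (x i)) -
        (1/2:ℝ)^S.card * ∫ x, f x| ≤
      ∑ i ∈ S, ∫ x, |f x - f (sigma m i x)| := by
  classical
  induction S using Finset.induction_on with
  | empty => simp
  | @insert i S hiS IH =>
    have hσmp : MeasurePreserving (sigma m i) (volume : Measure (Fin p → ℝ)) volume :=
      measurePreserving_sigma hm i
    have hσemb : MeasurableEmbedding (sigma (p := p) m i) :=
      (sigmaEquiv m hm i).measurableEmbedding
    have hfσ : Integrable (fun x => f (sigma m i x)) :=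
      (hσmp.integrable_comp hfi.aestronglyMeasurable).mpr hfi
    have hPmeas : Measurable (fun x : Fin p → ℝ => ∏ j ∈ S, chi m bb (s j) (x j)) :=
      Finset.measurable_prod S fun j _ =>
        (measurable_chi m bb (s j)).comp (measurable_pi_apply j)
    have hcmeas : Measurable (fun x : Fin p → ℝ => chi m bb (s i) (x i)) :=
      (measurable_chi m bb (s i)).comp (measurable_pi_apply i)
    have hP0 : ∀ x : Fin p → ℝ, 0 ≤ ∏ j ∈ S, chi m bb (s j) (x j) := fun x =>
      Finset.prod_nonneg fun j _ => chi_nonneg _ _ _ _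
    have hP1 : ∀ x : Fin p → ℝ, (∏ j ∈ S, chi m bb (s j) (x j)) ≤ 1 := fun x =>
      Finset.prod_le_one (fun j _ => chi_nonneg _ _ _ _) (fun j _ => chi_le_one _ _ _ _)
    have hc0 : ∀ x : Fin p → ℝ, 0 ≤ chi m bb (s i) (x i) := fun x => chi_nonneg _ _ _ _
    have hc1 : ∀ x : Fin p → ℝ, chi m bb (s i) (x i) ≤ 1 := fun x => chi_le_one _ _ _ _
    have hq0 : ∀ x : Fin p → ℝ,
        0 ≤ (∏ j ∈ S, chi m bb (s j) (x j)) * (1 - chi m bb (s i) (x i)) := fun x =>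
      mul_nonneg (hP0 x) (by linarith [hc1 x])
    have hq1 : ∀ x : Fin p → ℝ,
        (∏ j ∈ S, chi m bb (s j) (x j)) * (1 - chi m bb (s i) (x i)) ≤ 1 := fun x => by
      have := hP1 x; have := hP0 x; have := hc0 x; have := hc1 x; nlinarith
    have hqmeas : Measurable (fun x : Fin p → ℝ =>
        (∏ j ∈ S, chi m bb (s j) (x j)) * (1 - chi m bb (s i) (x i))) :=
      hPmeas.mul (measurable_const.sub hcmeas)
    have hPc0 : ∀ x : Fin p → ℝ,
        0 ≤ (∏ j ∈ S, chi m bb (s j) (x j)) * chi m bb (s i) (x i) := fun x =>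
      mul_nonneg (hP0 x) (hc0 x)
    have hPc1 : ∀ x : Fin p → ℝ,
        (∏ j ∈ S, chi m bb (s j) (x j)) * chi m bb (s i) (x i) ≤ 1 := fun x => by
      have := hP1 x; have := hP0 x; have := hc0 x; have := hc1 x; nlinarith
    have hI_fPc : Integrable (fun x =>
        f x * ((∏ j ∈ S, chi m bb (s j) (x j)) * chi m bb (s i) (x i))) :=
      integrable_mul_bdd hfi (hPmeas.mul hcmeas) hPc0 hPc1
    have hI_fP : Integrable (fun x => f x * ∏ j ∈ S, chi m bb (s j) (x j)) :=
      integrable_mul_bdd hfi hPmeas hP0 hP1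
    have hI_fq : Integrable (fun x =>
        f x * ((∏ j ∈ S, chi m bb (s j) (x j)) * (1 - chi m bb (s i) (x i)))) :=
      integrable_mul_bdd hfi hqmeas hq0 hq1
    have hI_fσq : Integrable (fun x =>
        f (sigma m i x) * ((∏ j ∈ S, chi m bb (s j) (x j)) * (1 - chi m bb (s i) (x i)))) :=
      integrable_mul_bdd hfσ hqmeas hq0 hq1
    have hI_sub : Integrable (fun x => f (sigma m i x) - f x) := hfσ.sub hfi
    -- change of variables
    have e1 : (∫ x, f (sigma m i x) *
          ((∏ j ∈ S, chi m bb (s j) (sigma m i x j)) * chi m bb (s i) (sigma m i x i)))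
        = ∫ x, f x * ((∏ j ∈ S, chi m bb (s j) (x j)) * chi m bb (s i) (x i)) :=
      hσmp.integral_comp hσemb
        (fun y => f y * ((∏ j ∈ S, chi m bb (s j) (y j)) * chi m bb (s i) (y i)))
    have hPσ : ∀ x : Fin p → ℝ,
        (∏ j ∈ S, chi m bb (s j) (sigma m i x j)) = ∏ j ∈ S, chi m bb (s j) (x j) := by
      intro x
      refine Finset.prod_congr rfl fun j hj => ?_
      have hji : j ≠ i := fun h => hiS (h ▸ hj)
      rw [sigma_apply_ne m i x hji]
    have hflipae : ∀ᵐ x : Fin p → ℝ,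
        chi m bb (s i) (sigma m i x i) = 1 - chi m bb (s i) (x i) := by
      refine (ae_irr m hm i).mono fun x hx => ?_
      rw [sigma_apply_self m i x]
      exact chi_flip hm bb (s i) hx
    have h1 : (∫ x, f (sigma m i x) *
          ((∏ j ∈ S, chi m bb (s j) (x j)) * (1 - chi m bb (s i) (x i))))
        = ∫ x, f x * ((∏ j ∈ S, chi m bb (s j) (x j)) * chi m bb (s i) (x i)) := by
      rw [← e1]
      refine integral_congr_ae (hflipae.mono fun x hx => ?_)
      simp only [hPσ x, hx]
    -- the key identity
    have key : (2:ℝ) * (∫ x, f x * ((∏ j ∈ S, chi m bb (s j) (x j)) * chi m bb (s i) (x i)))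
          - (∫ x, f x * ∏ j ∈ S, chi m bb (s j) (x j))
        = ∫ x, (f (sigma m i x) - f x) *
            ((∏ j ∈ S, chi m bb (s j) (x j)) * (1 - chi m bb (s i) (x i))) := by
      have expand : (∫ x, (f (sigma m i x) - f x) *
            ((∏ j ∈ S, chi m bb (s j) (x j)) * (1 - chi m bb (s i) (x i))))
          = (∫ x, f (sigma m i x) *
              ((∏ j ∈ S, chi m bb (s j) (x j)) * (1 - chi m bb (s i) (x i))))
            - ∫ x, f x * ((∏ j ∈ S, chi m bb (s j) (x j)) * (1 - chi m bb (s i) (x i))) := by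
        rw [← integral_sub hI_fσq hI_fq]
        refine integral_congr_ae (ae_of_all _ fun x => ?_)
        simp only []
        ring
      have split : (∫ x, f x * ((∏ j ∈ S, chi m bb (s j) (x j)) * (1 - chi m bb (s i) (x i))))
          = (∫ x, f x * ∏ j ∈ S, chi m bb (s j) (x j))
            - ∫ x, f x * ((∏ j ∈ S, chi m bb (s j) (x j)) * chi m bb (s i) (x i)) := by
        rw [← integral_sub hI_fP hI_fPc]
        refine integral_congr_ae (ae_of_all _ fun x => ?_)
        simp only []
        ring
      rw [expand, h1, split]
      ring
    have herr : |(2:ℝ) * (∫ x, f x * ((∏ j ∈ S, chi m bb (s j) (x j)) * chi m bb (s i) (x i)))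
          - (∫ x, f x * ∏ j ∈ S, chi m bb (s j) (x j))|
        ≤ ∫ x, |f x - f (sigma m i x)| := by
      rw [key]
      have hIu : Integrable (fun x => (f (sigma m i x) - f x) *
          ((∏ j ∈ S, chi m bb (s j) (x j)) * (1 - chi m bb (s i) (x i)))) :=
        integrable_mul_bdd hI_sub hqmeas hq0 hq1
      have habs : |∫ x, (f (sigma m i x) - f x) *
            ((∏ j ∈ S, chi m bb (s j) (x j)) * (1 - chi m bb (s i) (x i)))|
          ≤ ∫ x, |(f (sigma m i x) - f x) *
            ((∏ j ∈ S, chi m bb (s j) (x j)) * (1 - chi m bb (s i) (x i)))| := by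
        have h := norm_integral_le_integral_norm (μ := (volume : Measure (Fin p → ℝ)))
          (fun x => (f (sigma m i x) - f x) *
            ((∏ j ∈ S, chi m bb (s j) (x j)) * (1 - chi m bb (s i) (x i))))
        simp only [Real.norm_eq_abs] at h
        exact h
      refine habs.trans ?_
      have hmono : (∫ x, |(f (sigma m i x) - f x) *
            ((∏ j ∈ S, chi m bb (s j) (x j)) * (1 - chi m bb (s i) (x i)))|)
          ≤ ∫ x, |f (sigma m i x) - f x| := by
        refine integral_mono hIu.abs hI_sub.abs fun x => ?_
        rw [abs_mul]
        calc |f (sigma m i x) - f x| *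
              |(∏ j ∈ S, chi m bb (s j) (x j)) * (1 - chi m bb (s i) (x i))|
            ≤ |f (sigma m i x) - f x| * 1 := by
              have hb : |(∏ j ∈ S, chi m bb (s j) (x j)) * (1 - chi m bb (s i) (x i))| ≤ 1 := by
                rw [abs_of_nonneg (hq0 x)]; exact hq1 x
              exact mul_le_mul_of_nonneg_left hb (abs_nonneg _)
          _ = |f (sigma m i x) - f x| := mul_one _
      refine hmono.trans (le_of_eq ?_)
      exact integral_congr_ae (ae_of_all _ fun x => abs_sub_comm _ _)
    -- conclusion of the inductive step
    have hDnn : ∀ j : Fin p, 0 ≤ ∫ x, |f x - f (sigma m j x)| := fun j =>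
      integral_nonneg fun x => abs_nonneg _
    have hsumnn : 0 ≤ ∑ j ∈ S, ∫ x, |f x - f (sigma m j x)| :=
      Finset.sum_nonneg fun j _ => hDnn j
    rw [Finset.sum_insert hiS, Finset.card_insert_of_notMem hiS]
    have hIeq : (∫ x, f x * ∏ j ∈ insert i S, chi m bb (s j) (x j))
        = ∫ x, f x * ((∏ j ∈ S, chi m bb (s j) (x j)) * chi m bb (s i) (x i)) := by
      refine integral_congr_ae (ae_of_all _ fun x => ?_)
      simp only [Finset.prod_insert hiS]
      ring
    rw [hIeq]
    have e : (∫ x, f x * ((∏ j ∈ S, chi m bb (s j) (x j)) * chi m bb (s i) (x i)))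
          - (1/2:ℝ)^(S.card+1) * ∫ x, f x
        = (((2:ℝ) * (∫ x, f x * ((∏ j ∈ S, chi m bb (s j) (x j)) * chi m bb (s i) (x i)))
            - (∫ x, f x * ∏ j ∈ S, chi m bb (s j) (x j)))
          + ((∫ x, f x * ∏ j ∈ S, chi m bb (s j) (x j))
            - (1/2:ℝ)^S.card * ∫ x, f x)) / 2 := by
      rw [pow_succ]; ring
    rw [e]
    have h2 : |(((2:ℝ) * (∫ x, f x * ((∏ j ∈ S, chi m bb (s j) (x j)) * chi m bb (s i) (x i)))
            - (∫ x, f x * ∏ j ∈ S, chi m bb (s j) (x j)))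
          + ((∫ x, f x * ∏ j ∈ S, chi m bb (s j) (x j))
            - (1/2:ℝ)^S.card * ∫ x, f x)) / 2|
        ≤ (|(2:ℝ) * (∫ x, f x * ((∏ j ∈ S, chi m bb (s j) (x j)) * chi m bb (s i) (x i)))
            - (∫ x, f x * ∏ j ∈ S, chi m bb (s j) (x j))|
          + |(∫ x, f x * ∏ j ∈ S, chi m bb (s j) (x j))
            - (1/2:ℝ)^S.card * ∫ x, f x|) / 2 := by
      rw [abs_div, abs_two]
      exact (div_le_div_iff_of_pos_right two_pos).mpr (abs_add_le _ _)
    refine h2.trans ?_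
    linarith [herr, IH, hDnn i, hsumnn]


/-! ### Continuity of translation in `L¹` -/

theorem tendsto_translation {p : ℕ} (f : (Fin p → ℝ) → ℝ) (hfi : Integrable f)
    (w : ℕ → (Fin p → ℝ)) (hw : Tendsto w atTop (nhds 0)) :
    Tendsto (fun m => ∫ x, |f (x + w m) - f x|) atTop (nhds 0) := by
  have hev : ∀ᶠ m in atTop, w m ∈ Metric.closedBall (0 : Fin p → ℝ) 1 :=
    hw (Metric.closedBall_mem_nhds 0 one_pos)
  set w' : ℕ → (Fin p → ℝ) := fun m => if ‖w m‖ ≤ 1 then w m else 0 with hw'def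
  have heq : w' =ᶠ[atTop] w := by
    filter_upwards [hev] with m hmem
    have hb : ‖w m‖ ≤ 1 := by
      simpa [dist_zero_right] using Metric.mem_closedBall.mp hmem
    simp [hw'def, hb]
  have hw' : Tendsto w' atTop (nhds 0) := hw.congr' heq.symm
  have hw'b : ∀ m, ‖w' m‖ ≤ 1 := by
    intro m
    by_cases h : ‖w m‖ ≤ 1 <;> simp [hw'def, h]
  suffices hmain : Tendsto (fun m => ∫ x, |f (x + w' m) - f x|) atTop (nhds 0) by
    refine hmain.congr' ?_
    filter_upwards [heq] with m hm
    rw [hm]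
  rw [Metric.tendsto_nhds]
  intro ε hε
  obtain ⟨g, hg_supp, hfg, hg_cont, hg_int⟩ :=
    hfi.exists_hasCompactSupport_integral_sub_le (show (0:ℝ) < ε/4 by linarith)
  obtain ⟨C, hC⟩ := hg_cont.bounded_above_of_compact_support hg_supp
  have hC0 : 0 ≤ C := le_trans (norm_nonneg (g 0)) (hC 0)
  set K := Metric.cthickening 1 (tsupport g) with hK
  have hKco : IsCompact K := hg_supp.cthickening
  have hKmeas : MeasurableSet K := Metric.isClosed_cthickening.measurableSet
  have hbound_int : Integrable (fun x => K.indicator (fun _ => C) x + |g x|) := by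
    refine Integrable.add ?_ hg_int.abs
    rw [integrable_indicator_iff hKmeas]
    exact (integrableOn_const_iff).mpr (Or.inr hKco.measure_lt_top)
  have hFmeas : ∀ m, AEStronglyMeasurable (fun x : Fin p → ℝ => |g (x + w' m) - g x|)
      (volume : Measure (Fin p → ℝ)) := fun m =>
    (((hg_cont.comp (continuous_add_right (w' m))).sub hg_cont).abs).aestronglyMeasurable
  have hbound : ∀ m, ∀ᵐ x : Fin p → ℝ,
      ‖|g (x + w' m) - g x|‖ ≤ K.indicator (fun _ => C) x + |g x| := by
    intro m
    refine ae_of_all _ fun x => ?_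
    rw [Real.norm_eq_abs, abs_abs]
    have htri : |g (x + w' m) - g x| ≤ |g (x + w' m)| + |g x| := by
      simpa [Real.norm_eq_abs] using norm_sub_le (g (x + w' m)) (g x)
    have hind : |g (x + w' m)| ≤ K.indicator (fun _ => C) x := by
      by_cases hgx : g (x + w' m) = 0
      · rw [hgx, abs_zero]
        exact Set.indicator_nonneg (fun _ _ => hC0) x
      · have hxK : x ∈ K := by
          have hmem : x + w' m ∈ tsupport g := subset_tsupport g (Function.mem_support.mpr hgx)
          refine Metric.mem_cthickening_of_dist_le x (x + w' m) 1 _ hmem ?_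
          rw [dist_self_add_right]
          exact hw'b m
        rw [Set.indicator_of_mem hxK]
        simpa [Real.norm_eq_abs] using hC (x + w' m)
    linarith
  have hlim : ∀ᵐ x : Fin p → ℝ,
      Tendsto (fun m => |g (x + w' m) - g x|) atTop (nhds 0) := by
    refine ae_of_all _ fun x => ?_
    have h1 : Tendsto (fun m => x + w' m) atTop (nhds x) := by
      simpa using (tendsto_const_nhds (x := x) (f := (atTop : Filter ℕ))).add hw'
    have h2 : Tendsto (fun m => g (x + w' m)) atTop (nhds (g x)) := (hg_cont.tendsto x).comp h1
    have h3 : Tendsto (fun m => g (x + w' m) - g x) atTop (nhds 0) := by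
      simpa using h2.sub (tendsto_const_nhds (x := g x))
    simpa using h3.abs
  have hM : Tendsto (fun m => ∫ x, |g (x + w' m) - g x|) atTop (nhds 0) := by
    have := tendsto_integral_of_dominated_convergence (μ := (volume : Measure (Fin p → ℝ)))
      (F := fun m x => |g (x + w' m) - g x|) (f := fun _ => (0:ℝ))
      (fun x => K.indicator (fun _ => C) x + |g x|) hFmeas hbound_int hbound hlim
    simpa using this
  have hM' := (Metric.tendsto_nhds.mp hM) (ε/4) (by linarith)
  filter_upwards [hM'] with m hm
  have hgm : (∫ x, |g (x + w' m) - g x|) < ε/4 := by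
    have h0 : 0 ≤ ∫ x, |g (x + w' m) - g x| := integral_nonneg fun x => abs_nonneg _
    rw [Real.dist_eq, sub_zero, abs_of_nonneg h0] at hm
    exact hm
  have mp := measurePreserving_add_right (volume : Measure (Fin p → ℝ)) (w' m)
  have hftr : Integrable (fun x => f (x + w' m)) :=
    (mp.integrable_comp hfi.aestronglyMeasurable).mpr hfi
  have hgtr : Integrable (fun x => g (x + w' m)) :=
    (mp.integrable_comp hg_int.aestronglyMeasurable).mpr hg_int
  have hint1 : Integrable (fun x => |f (x + w' m) - f x|) := (hftr.sub hfi).abs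
  have hint2a : Integrable (fun x => |f (x + w' m) - g (x + w' m)|) := (hftr.sub hgtr).abs
  have hint2b : Integrable (fun x => |g (x + w' m) - g x|) := (hgtr.sub hg_int).abs
  have hint2c : Integrable (fun x => |g x - f x|) := (hg_int.sub hfi).abs
  have step1 : (∫ x, |f (x + w' m) - f x|)
      ≤ ∫ x, (|f (x + w' m) - g (x + w' m)| + (|g (x + w' m) - g x| + |g x - f x|)) := by
    refine integral_mono hint1 (hint2a.add (hint2b.add hint2c)) fun x => ?_
    calc |f (x + w' m) - f x|
        ≤ |f (x + w' m) - g (x + w' m)| + |g (x + w' m) - f x| := abs_sub_le _ _ _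
      _ ≤ |f (x + w' m) - g (x + w' m)| + (|g (x + w' m) - g x| + |g x - f x|) :=
          by gcongr; exact abs_sub_le _ _ _
  have hint23 : Integrable (fun x => |g (x + w' m) - g x| + |g x - f x|) := hint2b.add hint2c
  have step2 : (∫ x, (|f (x + w' m) - g (x + w' m)| + (|g (x + w' m) - g x| + |g x - f x|)))
      = (∫ x, |f (x + w' m) - g (x + w' m)|)
        + ((∫ x, |g (x + w' m) - g x|) + ∫ x, |g x - f x|) := by
    rw [integral_add hint2a hint23, integral_add hint2b hint2c]
  have htr : (∫ x, |f (x + w' m) - g (x + w' m)|) = ∫ x, |f x - g x| :=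
    integral_add_right_eq_self (fun x => |f x - g x|) (w' m)
  have hfg' : (∫ x, |f x - g x|) ≤ ε/4 := by
    simpa [Real.norm_eq_abs] using hfg
  have hgf : (∫ x, |g x - f x|) ≤ ε/4 := by
    calc (∫ x, |g x - f x|) = ∫ x, |f x - g x| :=
          integral_congr_ae (ae_of_all _ fun x => abs_sub_comm _ _)
      _ ≤ ε/4 := hfg'
  have hnn : 0 ≤ ∫ x, |f (x + w' m) - f x| := integral_nonneg fun x => abs_nonneg _
  rw [Real.dist_eq, sub_zero, abs_of_nonneg hnn]
  calc (∫ x, |f (x + w' m) - f x|) ≤ _ := step1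
    _ = _ := step2
    _ < ε := by rw [htr]; linarith

end AsympIndepAux

open AsympIndepAux

/-- **Asymptotic independence (general case).** For a `p`-dimensional
distribution with continuous density (not necessarily compactly supported), the
probability that each coordinate's fractional part lies in (`s i = true`) or outside
(`s i = false`) the green list converges to `(1/2)^p` as `m → ∞`, for any choice sequence
of green lists. -/
theorem asymptotic_independence (p : ℕ)
    (f : (Fin p → ℝ) → ℝ) (hf_cont : Continuous f) (hf_nonneg : ∀ x, 0 ≤ f x)
    (hf_int : ∫ x, f x = 1)
    (b : ∀ m : ℕ, Fin m → Bool) (s : Fin p → Bool) :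
    Tendsto (fun m : ℕ =>
      (((volume : Measure (Fin p → ℝ)).withDensity fun x => ENNReal.ofReal (f x))
        {x : Fin p → ℝ | ∀ i, (Int.fract (x i) ∈ greenSet m (b m) ↔ s i = true)}).toReal)
      atTop (nhds ((1 / 2 : ℝ) ^ p)) := by
  classical
  have hf_integrable : Integrable f := by
    by_contra h
    rw [integral_undef h] at hf_int
    norm_num at hf_int
  have hE : ∀ m : ℕ, MeasurableSet
      {x : Fin p → ℝ | ∀ i, (Int.fract (x i) ∈ greenSet m (b m) ↔ s i = true)} := by
    intro m
    rw [Set.setOf_forall]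
    refine MeasurableSet.iInter fun i => ?_
    have h2 : {x : Fin p → ℝ | Int.fract (x i) ∈ greenSet m (b m) ↔ s i = true}
        = (fun x : Fin p → ℝ => x i) ⁻¹' Tset m (b m) (s i) := rfl
    rw [h2]
    exact (measurable_pi_apply i) (measurableSet_Tset m (b m) (s i))
  have hval : ∀ m : ℕ,
      (((volume : Measure (Fin p → ℝ)).withDensity fun x => ENNReal.ofReal (f x))
        {x : Fin p → ℝ | ∀ i, (Int.fract (x i) ∈ greenSet m (b m) ↔ s i = true)}).toReal
      = ∫ x, f x * ∏ i : Fin p, chi m (b m) (s i) (x i) := by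
    intro m
    rw [withDensity_apply _ (hE m)]
    rw [← ofReal_integral_eq_lintegral_ofReal hf_integrable.integrableOn
      (ae_of_all _ fun x => hf_nonneg x)]
    rw [ENNReal.toReal_ofReal (setIntegral_nonneg (hE m) fun x _ => hf_nonneg x)]
    rw [← integral_indicator (hE m)]
    refine integral_congr_ae (ae_of_all _ fun x => ?_)
    by_cases hx : x ∈ {x : Fin p → ℝ | ∀ i, (Int.fract (x i) ∈ greenSet m (b m) ↔ s i = true)}
    · have hone : (∏ i : Fin p, chi m (b m) (s i) (x i)) = 1 :=
        Finset.prod_eq_one fun i _ => chi_of_mem (hx i)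
      simp only [Set.indicator_of_mem hx, hone, mul_one]
    · have hex : ∃ i, x i ∉ Tset m (b m) (s i) := by
        by_contra hcon
        push_neg at hcon
        exact hx fun i => hcon i
      obtain ⟨i, hi⟩ := hex
      have hzero : (∏ i : Fin p, chi m (b m) (s i) (x i)) = 0 :=
        Finset.prod_eq_zero (Finset.mem_univ i) (chi_of_not_mem hi)
      simp only [Set.indicator_of_notMem hx, hzero, mul_zero]
  have hbound : ∀ m : ℕ, 1 ≤ m →
      |(∫ x, f x * ∏ i : Fin p, chi m (b m) (s i) (x i)) - (1/2:ℝ)^p|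
        ≤ ∑ i : Fin p, ∫ x, |f x - f (sigma m i x)| := by
    intro m hm
    have h := main_est p f hf_integrable m hm (b m) s Finset.univ
    rw [hf_int, mul_one, Finset.card_univ, Fintype.card_fin] at h
    exact h
  have hD : ∀ i : Fin p,
      Tendsto (fun m : ℕ => ∫ x, |f x - f (sigma m i x)|) atTop (nhds 0) := by
    intro i
    have hvt : Tendsto (fun m : ℕ => (vs m i : Fin p → ℝ))
        atTop (nhds 0) := by
      rw [tendsto_pi_nhds]
      intro j
      by_cases hj : j = i
      · subst hj
        simp only [vs, Pi.single_eq_same]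
        have h2 : Tendsto (fun m : ℕ => 2*(m:ℝ)) atTop atTop :=
          Tendsto.const_mul_atTop two_pos tendsto_natCast_atTop_atTop
        have h3 : Tendsto (fun m : ℕ => (2*(m:ℝ))⁻¹) atTop (nhds 0) := h2.inv_tendsto_atTop
        simpa [one_div] using h3
      · simpa [vs, Pi.single_eq_of_ne hj] using tendsto_const_nhds
    have hvt' : Tendsto (fun m : ℕ => -(vs m i : Fin p → ℝ))
        atTop (nhds 0) := by
      simpa using hvt.neg
    have hplus := tendsto_translation f hf_integrable _ hvt
    have hminus := tendsto_translation f hf_integrable _ hvt'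
    have hsum := hplus.add hminus
    rw [add_zero] at hsum
    refine squeeze_zero' (Eventually.of_forall fun m => integral_nonneg fun x => abs_nonneg _)
      ?_ hsum
    rw [eventually_atTop]
    refine ⟨1, fun m hm => ?_⟩
    have mpplus := measurePreserving_add_right (volume : Measure (Fin p → ℝ))
      (vs m i)
    have mpminus := measurePreserving_add_right (volume : Measure (Fin p → ℝ))
      (-(vs m i) : Fin p → ℝ)
    have hf1 : Integrable (fun x => f (x + vs m i)) :=
      (mpplus.integrable_comp hf_integrable.aestronglyMeasurable).mpr hf_integrable
    have hf2 : Integrable (fun x => f (x + -(vs m i))) :=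
      (mpminus.integrable_comp hf_integrable.aestronglyMeasurable).mpr hf_integrable
    have hint1 : Integrable (fun x => |f (x + vs m i) - f x|) :=
      (hf1.sub hf_integrable).abs
    have hint2 : Integrable (fun x => |f (x + -(vs m i)) - f x|) :=
      (hf2.sub hf_integrable).abs
    have hσmp : MeasurePreserving (sigma m i) (volume : Measure (Fin p → ℝ)) volume :=
      measurePreserving_sigma hm i
    have hfσ : Integrable (fun x => f (sigma m i x)) :=
      (hσmp.integrable_comp hf_integrable.aestronglyMeasurable).mpr hf_integrable
    have hintL : Integrable (fun x => |f x - f (sigma m i x)|) :=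
      (hf_integrable.sub hfσ).abs
    have hptwise : ∀ x : Fin p → ℝ, |f x - f (sigma m i x)|
        ≤ |f (x + vs m i) - f x|
          + |f (x + -(vs m i)) - f x| := by
      intro x
      by_cases hx : x ∈ Aset m i
      · rw [show sigma m i x = x + vs m i from Set.piecewise_eq_of_mem _ _ _ hx]
        rw [abs_sub_comm]
        exact le_add_of_nonneg_right (abs_nonneg _)
      · rw [show sigma m i x = x + -(vs m i) from Set.piecewise_eq_of_notMem _ _ _ hx]
        rw [abs_sub_comm]
        exact le_add_of_nonneg_left (abs_nonneg _)
    calc (∫ x, |f x - f (sigma m i x)|)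
        ≤ ∫ x, (|f (x + vs m i) - f x|
            + |f (x + -(vs m i)) - f x|) :=
          integral_mono hintL (hint1.add hint2) hptwise
      _ = (∫ x, |f (x + vs m i) - f x|)
            + ∫ x, |f (x + -(vs m i)) - f x| :=
          integral_add hint1 hint2
  have hsum0 : Tendsto (fun m : ℕ => ∑ i : Fin p, ∫ x, |f x - f (sigma m i x)|)
      atTop (nhds 0) := by
    have := tendsto_finset_sum (Finset.univ : Finset (Fin p)) (fun i _ => hD i)
    simpa using this
  have habs : Tendsto (fun m : ℕ =>
      |(∫ x, f x * ∏ i : Fin p, chi m (b m) (s i) (x i)) - (1/2:ℝ)^p|) atTop (nhds 0) := by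
    refine squeeze_zero' (Eventually.of_forall fun m => abs_nonneg _) ?_ hsum0
    rw [eventually_atTop]
    exact ⟨1, fun m hm => hbound m hm⟩
  have hval' : Tendsto (fun m : ℕ => ∫ x, f x * ∏ i : Fin p, chi m (b m) (s i) (x i))
      atTop (nhds ((1/2:ℝ)^p)) := by
    rw [tendsto_iff_norm_sub_tendsto_zero]
    simpa [Real.norm_eq_abs] using habs
  exact Tendsto.congr (fun m => (hval m).symm) hval'
end

section
/- Fix a real number x_w and let ε be a random variable with continuous probability density function (not necessarily mean zero). Then as m → ∞, the probability that the fractional part of x_w + ε does not lie in the green list G converges to 1/2: P(x_w + ε − ⌊x_w + ε⌋ ∉ G) → 1/2. -/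
open MeasureTheory Set Filter

lemma tendsto_translate_L1 {g : ℝ → ℝ} (hg : Integrable g) :
    Tendsto (fun s : ℝ => ∫ x, |g (x + s) - g x|) (nhds 0) (nhds 0) := by
  rw [Metric.tendsto_nhds]
  intro ε hε
  obtain ⟨φ, hφsupp, hφle, hφcont, hφint⟩ :=
    hg.exists_hasCompactSupport_integral_sub_le (show (0:ℝ) < ε/4 by positivity)
  -- middle term tends to 0
  obtain ⟨C, hC⟩ := hφsupp.exists_bound_of_continuous hφcont
  obtain ⟨R, hR⟩ := hφsupp.isCompact.isBounded.subset_closedBall 0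
  have hmid : Tendsto (fun s : ℝ => ∫ x, |φ (x + s) - φ x|) (nhds 0) (nhds 0) := by
    have := tendsto_integral_filter_of_dominated_convergence
        (μ := volume) (l := nhds (0:ℝ))
        (F := fun s x => |φ (x + s) - φ x|) (f := fun _ => (0:ℝ))
        (bound := (Set.Icc (-(R+1)) (R+1)).indicator fun _ => 2 * C)
        ?_ ?_ ?_ ?_
    · simpa using this
    · filter_upwards with s
      exact ((hφcont.comp (continuous_id.add continuous_const)).sub hφcont).abs.aestronglyMeasurable
    · have h1 : Metric.closedBall (0:ℝ) 1 ∈ nhds (0:ℝ) := Metric.closedBall_mem_nhds 0 one_pos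
      filter_upwards [h1] with s hs
      filter_upwards with x
      have hs1 : |s| ≤ 1 := by simpa [Real.norm_eq_abs] using hs
      by_cases hx : x ∈ Set.Icc (-(R+1)) (R+1)
      · rw [Set.indicator_of_mem hx]
        have b1 : |φ (x + s)| ≤ C := by simpa [Real.norm_eq_abs] using hC (x + s)
        have b2 : |φ x| ≤ C := by simpa [Real.norm_eq_abs] using hC x
        rw [Real.norm_eq_abs, abs_abs]
        calc |φ (x + s) - φ x| ≤ |φ (x+s)| + |φ x| := abs_sub _ _
          _ ≤ 2 * C := by linarith
      · rw [Set.indicator_of_notMem hx]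
        have hxR : R + 1 < |x| := by
          simp only [Set.mem_Icc, not_and_or, not_le] at hx
          rcases hx with h | h <;> rcases abs_cases x with h' | h' <;> linarith [h'.1, h'.2]
        have z1 : φ x = 0 := by
          apply image_eq_zero_of_notMem_tsupport
          intro hmem
          have := hR hmem
          simp only [Metric.mem_closedBall, Real.dist_eq, sub_zero] at this
          linarith
        have z2 : φ (x + s) = 0 := by
          apply image_eq_zero_of_notMem_tsupport
          intro hmem
          have := hR hmem
          simp only [Metric.mem_closedBall, Real.dist_eq, sub_zero] at this
          have : |x| ≤ |x + s| + |s| := by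
            calc |x| = |x + s + (-s)| := by ring_nf
              _ ≤ |x + s| + |-s| := abs_add_le _ _
              _ = |x + s| + |s| := by rw [abs_neg]
          linarith
        simp [z1, z2]
    · rw [integrable_indicator_iff measurableSet_Icc]
      exact integrableOn_const measure_Icc_lt_top.ne
    · filter_upwards with x
      have : Continuous fun s : ℝ => |φ (x + s) - φ x| :=
        ((hφcont.comp (continuous_const.add continuous_id)).sub continuous_const).abs
      have := this.tendsto 0
      simpa using this
  -- now assemble
  have hD : ∀ᶠ s : ℝ in nhds 0, (∫ x, |φ (x + s) - φ x|) < ε/4 :=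
    hmid.eventually_lt_const (by positivity)
  filter_upwards [hD] with s hs
  have i1 : Integrable (fun x => g (x + s)) volume := hg.comp_add_right s
  have i2 : Integrable (fun x => φ (x + s)) volume := hφint.comp_add_right s
  have key : (∫ x, |g (x + s) - g x|) ≤
      (∫ x, |g (x + s) - φ (x + s)|) + (∫ x, |φ (x + s) - φ x|) + ∫ x, |φ x - g x| := by
    have e1 : Integrable (fun x => |g (x+s) - φ (x+s)|) volume := (i1.sub i2).abs
    have e2 : Integrable (fun x => |φ (x+s) - φ x|) volume := (i2.sub hφint).abs
    have e3 : Integrable (fun x => |φ x - g x|) volume := (hφint.sub hg).abs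
    calc (∫ x, |g (x + s) - g x|)
        ≤ ∫ x, (|g (x+s) - φ (x+s)| + |φ (x+s) - φ x| + |φ x - g x|) := by
          apply integral_mono ((i1.sub hg).abs) ((e1.add e2).add e3)
          intro x
          calc |g (x + s) - g x|
              = |(g (x+s) - φ (x+s)) + (φ (x+s) - φ x) + (φ x - g x)| := by ring_nf
            _ ≤ |g (x+s) - φ (x+s)| + |φ (x+s) - φ x| + |φ x - g x| := abs_add_three _ _ _
      _ = (∫ x, (|g (x+s) - φ (x+s)| + |φ (x+s) - φ x|)) + ∫ x, |φ x - g x| :=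
          integral_add (e1.add e2) e3
      _ = _ := by rw [integral_add e1 e2]
  have t1 : (∫ x, |g (x + s) - φ (x + s)|) ≤ ε/4 := by
    have := MeasureTheory.integral_add_right_eq_self (μ := volume)
      (fun x => |g x - φ x|) s
    rw [this]
    simpa [Real.norm_eq_abs] using hφle
  have t3 : (∫ x, |φ x - g x|) ≤ ε/4 := by
    simp_rw [abs_sub_comm (φ _)]
    simpa [Real.norm_eq_abs] using hφle
  have hnn : (0:ℝ) ≤ ∫ x, |g (x + s) - g x| := integral_nonneg fun x => abs_nonneg _
  rw [Real.dist_eq, sub_zero, abs_of_nonneg hnn]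
  linarith

lemma mem_greenSet_iff {m : ℕ} (hm : 0 < m) (b : Fin m → Bool) {x : ℝ}
    (hx : ∀ j : ℤ, x * (2 * m) ≠ (j : ℝ)) (hx0 : 0 ≤ x) (hx1 : x < 1) :
    x ∈ greenSet m b ↔
      ∃ k : Fin m, ⌊x * (2 * m)⌋ = 2 * (k : ℤ) + (if b k then 1 else 0) := by
  have h2m : (0:ℝ) < 2 * m := by positivity
  have h2m : (0:ℝ) < 2 * m := by positivity
  have key : ∀ n : ℤ, (n:ℝ) ≤ x * (2*m) → x * (2*m) ≤ (n:ℝ) + 1 → ⌊x * (2*m)⌋ = n := by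
    intro n hlo hhi
    have hne := hx (n + 1)
    rw [Int.floor_eq_iff]
    refine ⟨hlo, lt_of_le_of_ne (by push_cast; linarith) ?_⟩
    intro hcon
    exact hne (by push_cast; push_cast at hcon; linarith)
  simp only [greenSet, greenInterval, mem_iUnion, mem_Icc]
  constructor
  · rintro ⟨k, hk1, hk2⟩
    refine ⟨k, ?_⟩
    rw [div_le_iff₀ h2m] at hk1
    rw [le_div_iff₀ h2m] at hk2
    rcases h : b k <;> simp only [h, Bool.false_eq_true, if_true, if_false] at hk1 hk2 ⊢
    · apply key; push_cast; linarith
      push_cast; linarith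
    · apply key; push_cast; linarith
      push_cast; linarith
  · rintro ⟨k, hk⟩
    refine ⟨k, ?_, ?_⟩
    · rw [div_le_iff₀ h2m]
      have := Int.floor_le (x * (2*m))
      rw [hk] at this
      rcases h : b k <;> push_cast [h] at this ⊢ <;> linarith
    · rw [le_div_iff₀ h2m]
      have := Int.lt_floor_add_one (x * (2*m))
      rw [hk] at this
      rcases h : b k <;> push_cast [h] at this ⊢ <;> linarith

lemma flip_green {m : ℕ} (hm : 0 < m) (b : Fin m → Bool) {j : ℤ}
    (h0 : 0 ≤ j) (h2 : j < 2 * m) (hj : Even j) :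
    ((∃ k : Fin m, j = 2 * (k : ℤ) + (if b k then 1 else 0)) ↔
      ¬ (∃ k : Fin m, j + 1 = 2 * (k : ℤ) + (if b k then 1 else 0))) := by
  obtain ⟨r, hr⟩ := hj
  obtain ⟨q, hqm, rfl⟩ : ∃ q : ℕ, q < m ∧ j = 2 * (q:ℤ) := by
    refine ⟨j.toNat / 2, by omega, by omega⟩
  set K : Fin m := ⟨q, hqm⟩ with hK
  have e1 : (∃ k : Fin m, 2 * (q:ℤ) = 2 * (k : ℤ) + (if b k then 1 else 0)) ↔ b K = false := by
    constructor
    · rintro ⟨k, hk⟩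
      rcases h : b k
      · have : (k : ℤ) = q := by rw [h] at hk; simp at hk; omega
        have : k = K := by
          apply Fin.ext
          exact_mod_cast this
        rw [← this]; exact h
      · rw [h] at hk; simp at hk; omega
    · intro h
      exact ⟨K, by simp [h]; rfl⟩
  have e2 : (∃ k : Fin m, 2 * (q:ℤ) + 1 = 2 * (k : ℤ) + (if b k then 1 else 0)) ↔ b K = true := by
    constructor
    · rintro ⟨k, hk⟩
      rcases h : b k
      · rw [h] at hk; simp at hk; omega
      · have : (k : ℤ) = q := by rw [h] at hk; simp at hk; omega
        have : k = K := by
          apply Fin.ext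
          exact_mod_cast this
        rw [← this]; exact h
    · intro h
      exact ⟨K, by simp [h]; rfl⟩
  rw [e1, e2]
  simp

lemma fract_flip {m : ℕ} (hm : 0 < m) (b : Fin m → Bool) {x : ℝ}
    (hx : ∀ j : ℤ, x * (2 * m) ≠ (j : ℝ)) (hpar : Even ⌊x * (2 * m)⌋) :
    (Int.fract x ∈ greenSet m b ↔ Int.fract (x + 1 / (2 * m)) ∉ greenSet m b) := by
  have h2m : (0:ℝ) < 2 * m := by positivity
  have hhp : (0:ℝ) < 1 / (2 * m) := by positivity
  set f := Int.fract x with hf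
  have hf0 : 0 ≤ f := Int.fract_nonneg x
  have hf1 : f < 1 := Int.fract_lt_one x
  have hfx : f = x - ⌊x⌋ := rfl
  have hfgrid : ∀ j : ℤ, f * (2 * m) ≠ (j : ℝ) := by
    intro j hj
    apply hx (j + ⌊x⌋ * (2 * m))
    have e : x * (2 * m) = f * (2 * m) + (⌊x⌋:ℝ) * (2 * m) := by rw [hfx]; ring
    rw [e, hj]; push_cast; ring
  have hfloor : ⌊f * (2 * m)⌋ = ⌊x * (2 * m)⌋ - ⌊x⌋ * (2 * m) := by
    have h : f * (2 * m) = x * (2 * m) - ((⌊x⌋ * (2 * (m:ℤ)) : ℤ) : ℝ) := by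
      push_cast [hfx]; ring
    rw [h, Int.floor_sub_intCast]
  set j := ⌊f * (2 * m)⌋ with hj
  have hjpar : Even j := by
    rcases hpar with ⟨r, hr⟩
    exact ⟨r - ⌊x⌋ * m, by rw [hfloor, hr]; ring⟩
  have hj0 : 0 ≤ j := Int.floor_nonneg.2 (by positivity)
  have hj2m : j < 2 * m := by
    rw [hj]
    apply Int.floor_lt.2
    push_cast
    nlinarith
  have hjub : f * (2 * m) < j + 1 := Int.lt_floor_add_one _
  have hjle : (j:ℝ) + 1 ≤ 2 * m - 1 := by
    have : j + 1 ≤ 2 * (m:ℤ) - 1 := by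
      rcases hjpar with ⟨r, hr⟩; omega
    exact_mod_cast this
  have hlt : f + 1 / (2 * m) < 1 := by
    rw [← mul_lt_mul_iff_of_pos_right h2m]
    have e : (f + 1 / (2 * m)) * (2 * m) = f * (2 * m) + 1 := by field_simp
    rw [e, one_mul]
    linarith
  have hge : 0 ≤ f + 1 / (2 * m) := by linarith
  have hfract : Int.fract (x + 1 / (2 * m)) = f + 1 / (2 * m) := by
    have h : x + 1 / (2 * m) = (⌊x⌋ : ℝ) + (f + 1 / (2 * m)) := by rw [hfx]; ring
    rw [h, Int.fract_intCast_add, Int.fract_eq_self.2 ⟨hge, hlt⟩]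
  have emul : (f + 1 / (2 * m)) * (2 * m) = f * (2 * m) + 1 := by field_simp
  have hfgrid2 : ∀ i : ℤ, (f + 1 / (2 * m)) * (2 * m) ≠ (i : ℝ) := by
    intro i hi
    rw [emul] at hi
    exact hfgrid (i - 1) (by push_cast; linarith)
  have hfl2 : ⌊(f + 1 / (2 * m)) * (2 * m)⌋ = j + 1 := by
    rw [emul, show (1:ℝ) = ((1:ℤ):ℝ) by norm_num, Int.floor_add_intCast]
  rw [mem_greenSet_iff hm b hfgrid hf0 hf1, hfract,
      mem_greenSet_iff hm b hfgrid2 hge hlt, hfl2, ← hj]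
  exact flip_green hm b hj0 hj2m hjpar

lemma greenSet_measurable (m : ℕ) (b : Fin m → Bool) : MeasurableSet (greenSet m b) :=
  MeasurableSet.iUnion fun _ => measurableSet_Icc

lemma main_estimate {g : ℝ → ℝ} (hg : Integrable g) (hg1 : ∫ x, g x = 1)
    {m : ℕ} (hm : 0 < m) (b : Fin m → Bool) :
    |(∫ x, ({y : ℝ | Int.fract y ∈ greenSet m b}).indicator g x) - 1/2| ≤
      ((∫ x, |g (x + 1/(2*m)) - g x|) + (∫ x, |g (x + -(1/(2*m))) - g x|)) / 2 := by
  have h2m : (0:ℝ) < 2 * m := by positivity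
  set h : ℝ := 1/(2*(m:ℝ)) with hh
  set U : Set ℝ := {y : ℝ | Int.fract y ∈ greenSet m b} with hUdef
  have hU : MeasurableSet U := measurable_fract (greenSet_measurable m b)
  set E : Set ℝ := {x : ℝ | Even ⌊x * (2*m)⌋} with hEdef
  have hE : MeasurableSet E := by
    have : Measurable fun x : ℝ => ⌊x * (2*m)⌋ := (measurable_id.mul_const _).floor
    exact this (MeasurableSet.of_discrete (s := {n : ℤ | Even n}))
  set Z : Set ℝ := {x : ℝ | ∃ i : ℤ, x * (2*m) = (i:ℝ)} with hZdef
  have hZ : volume Z = 0 := by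
    refine measure_mono_null ?_ (measure_iUnion_null (s := fun i : ℤ => {((i:ℝ)/(2*m))})
      fun i => measure_singleton _)
    rintro x ⟨i, hi⟩
    refine mem_iUnion.2 ⟨i, ?_⟩
    simp only [mem_singleton_iff]
    field_simp
    linarith [hi]
  have haeZ : ∀ᵐ x : ℝ, x ∉ Z := measure_eq_zero_iff_ae_notMem.mp hZ
  -- floor shift identities
  have hshift : ∀ x : ℝ, ⌊(x + h) * (2*m)⌋ = ⌊x * (2*m)⌋ + 1 := by
    intro x
    have e : (x + h) * (2*m) = x * (2*m) + 1 := by rw [hh]; field_simp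
    rw [e, show (1:ℝ) = ((1:ℤ):ℝ) by norm_num, Int.floor_add_intCast]
  have hshift' : ∀ x : ℝ, ⌊(x + -h) * (2*m)⌋ = ⌊x * (2*m)⌋ - 1 := by
    intro x
    have e : (x + -h) * (2*m) = x * (2*m) - ((1:ℤ):ℝ) := by rw [hh]; push_cast; field_simp; ring
    rw [e, Int.floor_sub_intCast]
  have hgridshift : ∀ x : ℝ, x ∉ Z → (x + -h) ∉ Z := by
    intro x hx ⟨i, hi⟩
    apply hx
    refine ⟨i + 1, ?_⟩
    have e : (x + -h) * (2*m) = x * (2*m) - 1 := by rw [hh]; field_simp; ring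
    rw [e] at hi
    push_cast
    linarith
  -- flip on E : for x ∉ Z, x ∈ E : x ∈ U ↔ x + h ∉ U
  have flipE : ∀ x : ℝ, x ∉ Z → x ∈ E → (x ∈ U ↔ (x + h) ∉ U) := by
    intro x hxZ hxE
    have hx' : ∀ j : ℤ, x * (2*m) ≠ (j:ℝ) := by
      intro j hj; exact hxZ ⟨j, hj⟩
    exact fract_flip hm b hx' hxE
  -- flip off E : for x ∉ Z, x ∉ E : x ∉ U ↔ (x + -h) ∈ U
  have flipO : ∀ x : ℝ, x ∉ Z → x ∉ E → (x ∉ U ↔ (x + -h) ∈ U) := by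
    intro x hxZ hxE
    have hxZ' := hgridshift x hxZ
    have hx' : ∀ j : ℤ, (x + -h) * (2*m) ≠ (j:ℝ) := by
      intro j hj; exact hxZ' ⟨j, hj⟩
    have hpar : Even ⌊(x + -h) * (2*m)⌋ := by
      rw [hshift' x]
      rcases Int.even_or_odd ⌊x * (2*m)⌋ with he | ho
      · exact absurd he hxE
      · rcases ho with ⟨r, hr⟩; exact ⟨r, by omega⟩
    have := fract_flip hm b hx' hpar
    rw [show x + -h + 1/(2*(m:ℝ)) = x by rw [hh]; ring] at this
    constructor
    · intro hxU
      by_contra hc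
      exact hxU ((not_not.mp ((not_iff_not.2 this).mp (by exact hc))))
    · intro hc hxU
      exact (this.mp hc) hxU
  -- integrability
  have hgp : Integrable (fun x => g (x + h)) volume := hg.comp_add_right h
  have hgm : Integrable (fun x => g (x + -h)) volume := hg.comp_add_right (-h)
  have hUg : Integrable (U.indicator g) volume := hg.indicator hU
  have hUcg : Integrable (Uᶜ.indicator g) volume := hg.indicator hU.compl
  have hUgp : Integrable (U.indicator fun t => g (t + h)) volume := hgp.indicator hU
  have hUgm : Integrable (U.indicator fun t => g (t + -h)) volume := hgm.indicator hU
  set A := ∫ x, U.indicator g x with hA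
  set B := ∫ x, Uᶜ.indicator g x with hB
  have hAB : A + B = 1 := by
    rw [hA, hB, integral_indicator hU, integral_indicator hU.compl,
      integral_add_compl hU hg, hg1]
  have c1 : ∫ x in E, Uᶜ.indicator g x = ∫ y in Eᶜ, (U.indicator fun t => g (t + -h)) y := by
    rw [← integral_indicator hE, ← integral_indicator hE.compl,
      ← integral_add_right_eq_self (μ := volume)
        (Eᶜ.indicator fun y => (U.indicator fun t => g (t + -h)) y) h]
    apply integral_congr_ae
    filter_upwards [haeZ] with x hxZ
    by_cases hxE : x ∈ E
    · have hEv : Even ⌊x * (2*m)⌋ := hxE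
      have hxhE : x + h ∈ Eᶜ := by
        simp only [mem_compl_iff, hEdef, mem_setOf_eq, hshift x, Int.even_add_one]
        exact not_not.2 hEv
      rw [indicator_of_mem hxE, indicator_of_mem hxhE]
      by_cases hxU : x ∈ U
      · rw [indicator_of_notMem (show x ∉ Uᶜ by simpa using hxU),
          indicator_of_notMem ((flipE x hxZ hxE).mp hxU)]
      · rw [indicator_of_mem (show x ∈ Uᶜ from hxU),
          indicator_of_mem (not_not.mp (fun hc => hxU (((flipE x hxZ hxE)).mpr hc)))]
        rw [add_neg_cancel_right]
    · have hOdd : ¬ Even ⌊x * (2*m)⌋ := hxE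
      have hxhE : x + h ∉ Eᶜ := by
        simp only [mem_compl_iff, hEdef, mem_setOf_eq, hshift x, Int.even_add_one, not_not]
        exact hOdd
      rw [indicator_of_notMem hxE, indicator_of_notMem hxhE]
  have c2 : ∫ x in Eᶜ, Uᶜ.indicator g x = ∫ y in E, (U.indicator fun t => g (t + h)) y := by
    rw [← integral_indicator hE.compl, ← integral_indicator hE,
      ← integral_add_right_eq_self (μ := volume)
        (E.indicator fun y => (U.indicator fun t => g (t + h)) y) (-h)]
    apply integral_congr_ae
    filter_upwards [haeZ] with x hxZ
    by_cases hxE : x ∈ E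
    · have hxhE : x + -h ∉ E := by
        simp only [hEdef, mem_setOf_eq, hshift' x]
        rcases (show Even ⌊x * (2*m)⌋ from hxE) with ⟨r, hr⟩
        intro ⟨r', hr'⟩; omega
      rw [indicator_of_notMem (show x ∉ Eᶜ by simpa using hxE),
         indicator_of_notMem hxhE]
    · have hxhE : x + -h ∈ E := by
        simp only [hEdef, mem_setOf_eq, hshift' x]
        rcases Int.even_or_odd ⌊x * (2*m)⌋ with he | ⟨r, hr⟩
        · exact absurd he hxE
        · exact ⟨r, by omega⟩
      rw [indicator_of_mem (show x ∈ Eᶜ from hxE), indicator_of_mem hxhE]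
      by_cases hxU : x ∈ U
      · rw [indicator_of_notMem (show x ∉ Uᶜ by simpa using hxU),
          indicator_of_notMem (fun hc => ((flipO x hxZ hxE).mpr hc) hxU)]
      · rw [indicator_of_mem (show x ∈ Uᶜ from hxU),
          indicator_of_mem ((flipO x hxZ hxE).mp hxU)]
        rw [neg_add_cancel_right]
  -- generic bound
  have bnd : ∀ (s : Set ℝ), MeasurableSet s → ∀ t : ℝ,
      |(∫ x in s, U.indicator g x) - ∫ x in s, (U.indicator fun y => g (y + t)) x| ≤
        ∫ x, |g (x + t) - g x| := by
    intro s hs t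
    have hgt : Integrable (fun x => g (x + t)) volume := hg.comp_add_right t
    have hUgt : Integrable (U.indicator fun y => g (y + t)) volume := hgt.indicator hU
    have habs : Integrable (fun x => |g (x + t) - g x|) volume := (hgt.sub hg).abs
    rw [← integral_sub hUg.integrableOn hUgt.integrableOn]
    calc |∫ x in s, (U.indicator g x - (U.indicator fun y => g (y + t)) x)|
        ≤ ∫ x in s, |U.indicator g x - (U.indicator fun y => g (y + t)) x| := by
          simpa [Real.norm_eq_abs] using
            norm_integral_le_integral_norm (μ := volume.restrict s)
              (fun x => U.indicator g x - (U.indicator fun y => g (y + t)) x)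
      _ ≤ ∫ x in s, |g (x + t) - g x| := by
          apply integral_mono ((hUg.sub hUgt).abs.integrableOn) habs.integrableOn
          intro x
          simp only [Pi.sub_apply]
          by_cases hxU : x ∈ U
          · rw [indicator_of_mem hxU, indicator_of_mem hxU, abs_sub_comm]
          · rw [indicator_of_notMem hxU, indicator_of_notMem hxU]
            simp [abs_nonneg]
      _ ≤ ∫ x, |g (x + t) - g x| :=
          setIntegral_le_integral habs (ae_of_all _ fun x => abs_nonneg _)
  have splitA : A = (∫ x in E, U.indicator g x) + ∫ x in Eᶜ, U.indicator g x :=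
    (integral_add_compl hE hUg).symm
  have splitB : B = (∫ x in E, Uᶜ.indicator g x) + ∫ x in Eᶜ, Uᶜ.indicator g x :=
    (integral_add_compl hE hUcg).symm
  rw [c1, c2] at splitB
  have d1 := bnd E hE h
  have d2 := bnd Eᶜ hE.compl (-h)
  have hABle : |A - B| ≤ (∫ x, |g (x + h) - g x|) + ∫ x, |g (x + -h) - g x| := by
    have e : A - B = ((∫ x in E, U.indicator g x) - ∫ y in E, (U.indicator fun t => g (t + h)) y)
        + ((∫ x in Eᶜ, U.indicator g x) - ∫ y in Eᶜ, (U.indicator fun t => g (t + -h)) y) := by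
      rw [splitA, splitB]; ring
    rw [e]
    exact le_trans (abs_add_le _ _) (by exact add_le_add d1 d2)
  have hfin : A - 1/2 = (A - B)/2 := by linarith
  calc |A - 1/2| = |A - B|/2 := by rw [hfin, abs_div]; norm_num
    _ ≤ _ := by linarith [hABle]

/-- **Attack success rate.** Fix `x_w ∈ ℝ` and let `ε` be a random variable with a
continuous probability density `a` (not necessarily mean zero). Then as `m → ∞` (for any
choice sequence of green lists), the probability that the fractional part of `x_w + ε`
does not lie in the green list converges to `1/2`. -/
theorem attack_success_rate (xw : ℝ) (a : ℝ → ℝ) (ha_cont : Continuous a)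
    (ha_nonneg : ∀ x, 0 ≤ a x) (ha_int : ∫ x, a x = 1)
    (b : ∀ m : ℕ, Fin m → Bool) :
    Tendsto (fun m : ℕ =>
      ((volume.withDensity fun x => ENNReal.ofReal (a x))
        {e : ℝ | Int.fract (xw + e) ∉ greenSet m (b m)}).toReal)
      atTop (nhds (1 / 2)) := by
  have hInt : Integrable a volume := by
    by_contra hc
    rw [integral_undef hc] at ha_int
    norm_num at ha_int
  set μ := volume.withDensity fun x => ENNReal.ofReal (a x) with hμ
  have hμuniv : μ Set.univ = 1 := by
    rw [hμ, withDensity_apply _ MeasurableSet.univ, Measure.restrict_univ,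
      ← ofReal_integral_eq_lintegral_ofReal hInt (ae_of_all _ ha_nonneg), ha_int]
    norm_num
  have hprob : IsProbabilityMeasure μ := ⟨hμuniv⟩
  set g : ℝ → ℝ := fun y => a (y - xw) with hgdef
  have hg : Integrable g volume := hInt.comp_sub_right xw
  have hg1 : ∫ x, g x = 1 := by
    rw [hgdef]
    rw [integral_sub_right_eq_self a xw]
    exact ha_int
  have hterm : ∀ m : ℕ, (μ {e : ℝ | Int.fract (xw + e) ∉ greenSet m (b m)}).toReal
      = 1 - ∫ x, ({y : ℝ | Int.fract y ∈ greenSet m (b m)}).indicator g x := by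
    intro m
    set U : Set ℝ := {y : ℝ | Int.fract y ∈ greenSet m (b m)} with hUdef
    have hUm : MeasurableSet U := measurable_fract (greenSet_measurable m (b m))
    set T : Set ℝ := {e : ℝ | Int.fract (xw + e) ∈ greenSet m (b m)} with hTdef
    have hTm : MeasurableSet T :=
      (Measurable.fract (measurable_const.add measurable_id)) (greenSet_measurable m (b m))
    have hcompl : {e : ℝ | Int.fract (xw + e) ∉ greenSet m (b m)} = Tᶜ := rfl
    have hμT : μ T = ENNReal.ofReal (∫ e in T, a e) := by
      rw [hμ, withDensity_apply _ hTm,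
        ← ofReal_integral_eq_lintegral_ofReal hInt.integrableOn
          (ae_of_all _ fun x => ha_nonneg x)]
    have htoReal : (μ T).toReal = ∫ e in T, a e := by
      rw [hμT, ENNReal.toReal_ofReal (setIntegral_nonneg hTm fun x _ => ha_nonneg x)]
    have hTU : ∫ e in T, a e = ∫ x, U.indicator g x := by
      rw [← integral_indicator hTm,
        ← integral_add_right_eq_self (μ := volume) (U.indicator g) xw]
      apply integral_congr_ae
      filter_upwards with e
      by_cases he : e ∈ T
      · have heU : e + xw ∈ U := by
          rw [hUdef]; simp only [mem_setOf_eq, add_comm e xw]; exact he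
        rw [indicator_of_mem he, indicator_of_mem heU, hgdef]
        simp [add_sub_cancel_right]
      · have heU : e + xw ∉ U := by
          rw [hUdef]; simp only [mem_setOf_eq, add_comm e xw]; exact he
        rw [indicator_of_notMem he, indicator_of_notMem heU]
    have hle : μ T ≤ 1 := by rw [← hμuniv]; exact measure_mono (subset_univ T)
    rw [hcompl, measure_compl hTm (measure_ne_top μ T), hμuniv,
      ENNReal.toReal_sub_of_le hle ENNReal.one_ne_top, ENNReal.toReal_one, htoReal, hTU]
  simp only [hterm]
  have hseq : Tendsto (fun m : ℕ => 1/(2*(m:ℝ))) atTop (nhds 0) := by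
    simp only [one_div]
    exact tendsto_inv_atTop_zero.comp (tendsto_natCast_atTop_atTop.const_mul_atTop two_pos)
  have hmain : Tendsto (fun m : ℕ =>
      ∫ x, ({y : ℝ | Int.fract y ∈ greenSet m (b m)}).indicator g x) atTop (nhds (1/2)) := by
    rw [tendsto_iff_dist_tendsto_zero]
    have hDcont := tendsto_translate_L1 hg
    have hseq' : Tendsto (fun m : ℕ => -(1/(2*(m:ℝ)))) atTop (nhds 0) := by
      simpa using hseq.neg
    have hc : Tendsto (fun m : ℕ =>
        ((∫ x, |g (x + 1/(2*(m:ℝ))) - g x|) + ∫ x, |g (x + -(1/(2*(m:ℝ)))) - g x|)/2)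
        atTop (nhds 0) := by
      have := ((hDcont.comp hseq).add (hDcont.comp hseq')).div_const 2
      simpa using this
    apply squeeze_zero' ?_ ?_ hc
    · filter_upwards with m; exact dist_nonneg
    · filter_upwards [eventually_gt_atTop 0] with m hm
      have := main_estimate hg hg1 hm (b m)
      rw [Real.dist_eq]
      exact this
  have h2 := hmain.const_sub (1:ℝ)
  rw [show (1:ℝ) - 1/2 = 1/2 by norm_num] at h2
  exact h2
end
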